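/- arXiv:0901.3283 — 4 statements merged into one kernel-verified Lean document; each statement's English description precedes it below -/
import Mathlib

section
/- For any integers N ≥ 1 and 1 ≤ m ≤ N, the sum over all partitions S of {1,...,N} with exactly m blocks of the product Π_{A∈S} |A|! equals (N!/m!) · C(N-1, m-1), where C denotes the binomial coefficient. -/
open Finset

variable {α : Type*} [DecidableEq α]

def IsPart (s : Finset α) (S : Finset (Finset α)) : Prop :=
  (∀ A ∈ S, A.Nonempty) ∧
  (∀ A ∈ S, ∀ B ∈ S, A ≠ B → Disjoint A B) ∧
  S.biUnion id = s

theorem IsPart.subset {s : Finset α} {S : Finset (Finset α)} (h : IsPart s S)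
    {A : Finset α} (hA : A ∈ S) : A ⊆ s := by
  rw [← h.2.2]; intro x hx; exact mem_biUnion.2 ⟨A, hA, hx⟩

theorem IsPart.mem_powerset {s : Finset α} {S : Finset (Finset α)} (h : IsPart s S) :
    S ∈ s.powerset.powerset := by
  simp only [Finset.mem_powerset]
  intro A hA
  simpa using h.subset hA

open scoped Classical in
noncomputable def pg (s : Finset α) (m : ℕ) : ℕ :=
  ∑ S ∈ (s.powerset.powerset.filter fun S => IsPart s S ∧ S.card = m),
    ∏ A ∈ S, A.card.factorial

open scoped Classical in
theorem mem_pgIndex {s : Finset α} {S : Finset (Finset α)} {m : ℕ} :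
    S ∈ (s.powerset.powerset.filter fun S => IsPart s S ∧ S.card = m) ↔
      IsPart s S ∧ S.card = m := by
  constructor
  · exact fun h => (mem_filter.1 h).2
  · exact fun h => mem_filter.2 ⟨h.1.mem_powerset, h⟩

def blockOf (S : Finset (Finset α)) (a : α) : Finset α :=
  S.sup fun A => if a ∈ A then A else ∅

theorem blockOf_eq {s : Finset α} {S : Finset (Finset α)} (h : IsPart s S)
    {A : Finset α} (hA : A ∈ S) {a : α} (ha : a ∈ A) : blockOf S a = A := by
  apply le_antisymm
  · apply Finset.sup_le
    intro B hB
    by_cases haB : a ∈ B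
    · have : B = A := by
        by_contra hne
        exact Finset.disjoint_left.1 (h.2.1 B hB A hA hne) haB ha
      subst this
      simp [if_pos haB]
    · simp [haB]
  · exact le_trans (by simp [ha]) (Finset.le_sup hA)

theorem exists_block {s : Finset α} {S : Finset (Finset α)} (h : IsPart s S)
    {a : α} (ha : a ∈ s) : blockOf S a ∈ S ∧ a ∈ blockOf S a := by
  rw [← h.2.2] at ha
  obtain ⟨A, hA, haA⟩ := mem_biUnion.1 ha
  rw [blockOf_eq h hA haA]
  exact ⟨hA, haA⟩

theorem IsPart.eq_of_mem {s : Finset α} {S : Finset (Finset α)} (h : IsPart s S)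
    {A B : Finset α} (hA : A ∈ S) (hB : B ∈ S) {x : α} (hxA : x ∈ A) (hxB : x ∈ B) :
    A = B := by
  by_contra hne
  exact Finset.disjoint_left.1 (h.2.1 A hA B hB hne) hxA hxB

theorem IsPart.erase_singleton {s : Finset α} {S : Finset (Finset α)} {a : α}
    (ha : a ∉ s) (h : IsPart (insert a s) S) (hs : {a} ∈ S) :
    IsPart s (S.erase {a}) := by
  refine ⟨fun A hA => h.1 A (mem_of_mem_erase hA),
    fun A hA B hB hne => h.2.1 A (mem_of_mem_erase hA) B (mem_of_mem_erase hB) hne, ?_⟩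
  ext x
  simp only [mem_biUnion, mem_erase, id]
  constructor
  · rintro ⟨A, ⟨hne, hA⟩, hx⟩
    have haA : a ∉ A := by
      intro haA
      exact hne (h.eq_of_mem hA hs haA (mem_singleton_self a))
    have := h.subset hA hx
    rcases mem_insert.1 this with h1 | h1
    · exact absurd (h1 ▸ hx) haA
    · exact h1
  · intro hx
    have hx' : x ∈ insert a s := mem_insert_of_mem hx
    rw [← h.2.2] at hx'
    obtain ⟨A, hA, hxA⟩ := mem_biUnion.1 hx'
    refine ⟨A, ⟨?_, hA⟩, hxA⟩
    rintro rfl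
    simp only [id, mem_singleton] at hxA
    exact ha (hxA ▸ hx)

theorem IsPart.not_singleton_mem {s : Finset α} {T : Finset (Finset α)} {a : α}
    (ha : a ∉ s) (h : IsPart s T) : {a} ∉ T := by
  intro hm
  exact ha (h.subset hm (mem_singleton_self a))

theorem IsPart.insert_singleton {s : Finset α} {T : Finset (Finset α)} {a : α}
    (ha : a ∉ s) (h : IsPart s T) : IsPart (insert a s) (insert {a} T) := by
  refine ⟨?_, ?_, ?_⟩
  · intro A hA
    rcases mem_insert.1 hA with rfl | hA
    · exact singleton_nonempty a
    · exact h.1 A hA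
  · intro A hA B hB hne
    have key : ∀ C ∈ T, Disjoint {a} C := by
      intro C hC
      simp only [Finset.disjoint_singleton_left]
      intro haC
      exact ha (h.subset hC haC)
    rcases mem_insert.1 hA with rfl | hA' <;> rcases mem_insert.1 hB with rfl | hB'
    · exact absurd rfl hne
    · exact key B hB'
    · exact (key A hA').symm
    · exact h.2.1 A hA' B hB' hne
  · rw [biUnion_insert, h.2.2]
    rw [Finset.insert_eq]; rfl

section Case2

variable {s : Finset α} {a : α}

-- forward direction facts
theorem case2_facts {S : Finset (Finset α)} (ha : a ∉ s)
    (h : IsPart (insert a s) S) (hns : ({a} : Finset α) ∉ S) :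
    blockOf S a ∈ S ∧ a ∈ blockOf S a ∧ ((blockOf S a).erase a).Nonempty ∧
      ((blockOf S a).erase a) ∉ S := by
  obtain ⟨hA, haA⟩ := exists_block h (mem_insert_self a s)
  set A := blockOf S a with hAdef
  have hBne : (A.erase a).Nonempty := by
    rw [Finset.nonempty_iff_ne_empty]
    intro hemp
    rcases (Finset.erase_eq_empty_iff A a).1 hemp with h1 | h1
    · exact (h.1 A hA).ne_empty h1
    · exact hns (h1 ▸ hA)
  refine ⟨hA, haA, hBne, ?_⟩
  intro hBS
  have hne : A.erase a ≠ A := by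
    intro heq
    have := heq ▸ Finset.notMem_erase a A
    exact this haA
  have := h.2.1 _ hBS _ hA hne
  obtain ⟨x, hx⟩ := hBne
  exact Finset.disjoint_left.1 this hx (Finset.mem_of_mem_erase hx)

theorem case2_ispart_forward {S : Finset (Finset α)} (ha : a ∉ s)
    (h : IsPart (insert a s) S) (hns : ({a} : Finset α) ∉ S) :
    IsPart s (insert ((blockOf S a).erase a) (S.erase (blockOf S a))) := by
  obtain ⟨hA, haA, hBne, hBS⟩ := case2_facts ha h hns
  set A := blockOf S a with hAdef
  set B := A.erase a with hBdef
  have hBsubA : B ⊆ A := Finset.erase_subset a A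
  have hdisjB : ∀ C ∈ S.erase A, Disjoint B C := by
    intro C hC
    exact Finset.disjoint_of_subset_left hBsubA
      (h.2.1 A hA C (mem_of_mem_erase hC) (Ne.symm (ne_of_mem_erase hC)))
  have hnotA : ∀ C ∈ S, C ≠ A → a ∉ C := by
    intro C hC hne haC
    exact hne (h.eq_of_mem hC hA haC haA)
  refine ⟨?_, ?_, ?_⟩
  · intro C hC
    rcases mem_insert.1 hC with rfl | hC
    · exact hBne
    · exact h.1 C (mem_of_mem_erase hC)
  · intro C hC D hD hne
    rcases mem_insert.1 hC with rfl | hC' <;> rcases mem_insert.1 hD with rfl | hD'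
    · exact absurd rfl hne
    · exact hdisjB D hD'
    · exact (hdisjB C hC').symm
    · exact h.2.1 C (mem_of_mem_erase hC') D (mem_of_mem_erase hD') hne
  · ext x
    simp only [mem_biUnion, mem_insert, mem_erase, id]
    constructor
    · rintro ⟨C, hC, hxC⟩
      rcases hC with rfl | ⟨hne, hC⟩
      · have hxA : x ∈ A := hBsubA hxC
        have := h.subset hA hxA
        rcases mem_insert.1 this with rfl | h1
        · exact absurd hxC (Finset.notMem_erase x A)
        · exact h1
      · have := h.subset hC hxC
        rcases mem_insert.1 this with rfl | h1
        · exact absurd hxC (hnotA C hC hne)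
        · exact h1
    · intro hx
      have hx' : x ∈ insert a s := mem_insert_of_mem hx
      rw [← h.2.2] at hx'
      obtain ⟨C, hC, hxC⟩ := mem_biUnion.1 hx'
      by_cases hCA : C = A
      · subst hCA
        refine ⟨B, Or.inl rfl, ?_⟩
        rw [hBdef]
        exact Finset.mem_erase.2 ⟨fun hxa => ha (hxa ▸ hx), hxC⟩
      · exact ⟨C, Or.inr ⟨hCA, hC⟩, hxC⟩

end Case2

section Case2b

variable {s : Finset α} {a : α}

theorem case2_back_facts {T : Finset (Finset α)} {B : Finset α} (ha : a ∉ s)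
    (h : IsPart s T) (hB : B ∈ T) :
    a ∉ B ∧ insert a B ∉ T.erase B ∧ insert a B ∉ T := by
  have haB : a ∉ B := fun haB => ha (h.subset hB haB)
  have h2 : insert a B ∉ T := by
    intro hm
    exact ha (h.subset hm (mem_insert_self a B))
  exact ⟨haB, fun hm => h2 (mem_of_mem_erase hm), h2⟩

theorem case2_ispart_backward {T : Finset (Finset α)} {B : Finset α} (ha : a ∉ s)
    (h : IsPart s T) (hB : B ∈ T) :
    IsPart (insert a s) (insert (insert a B) (T.erase B)) := by
  obtain ⟨haB, hsub2, h2⟩ := case2_back_facts ha h hB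
  have hdisj : ∀ C ∈ T.erase B, Disjoint (insert a B) C := by
    intro C hC
    rw [Finset.disjoint_insert_left]
    exact ⟨fun haC => ha (h.subset (mem_of_mem_erase hC) haC),
      h.2.1 B hB C (mem_of_mem_erase hC) (Ne.symm (ne_of_mem_erase hC))⟩
  refine ⟨?_, ?_, ?_⟩
  · intro C hC
    rcases mem_insert.1 hC with rfl | hC
    · exact insert_nonempty a B
    · exact h.1 C (mem_of_mem_erase hC)
  · intro C hC D hD hne
    rcases mem_insert.1 hC with rfl | hC' <;> rcases mem_insert.1 hD with rfl | hD'
    · exact absurd rfl hne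
    · exact hdisj D hD'
    · exact (hdisj C hC').symm
    · exact h.2.1 C (mem_of_mem_erase hC') D (mem_of_mem_erase hD') hne
  · ext x
    simp only [mem_biUnion, mem_insert, mem_erase, id]
    constructor
    · rintro ⟨C, hC, hxC⟩
      rcases hC with rfl | ⟨hne, hC⟩
      · rcases mem_insert.1 hxC with rfl | hxB
        · exact Or.inl rfl
        · exact Or.inr (h.subset hB hxB)
      · exact Or.inr (h.subset hC hxC)
    · rintro (rfl | hx)
      · exact ⟨_, Or.inl rfl, mem_insert_self _ B⟩
      · rw [← h.2.2] at hx
        obtain ⟨C, hC, hxC⟩ := mem_biUnion.1 hx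
        by_cases hCB : C = B
        · subst hCB
          exact ⟨insert a C, Or.inl rfl, mem_insert_of_mem hxC⟩
        · exact ⟨C, Or.inr ⟨hCB, hC⟩, hxC⟩

end Case2b

open scoped Classical in
theorem case1_sum {s : Finset α} {a : α} (ha : a ∉ s) (m : ℕ) :
    ∑ S ∈ (((insert a s).powerset.powerset.filter
        fun S => IsPart (insert a s) S ∧ S.card = m + 1).filter
        fun S => ({a} : Finset α) ∈ S),
      ∏ A ∈ S, A.card.factorial = pg s m := by
  rw [pg]
  refine Finset.sum_nbij' (fun S => S.erase {a}) (fun T => insert {a} T) ?_ ?_ ?_ ?_ ?_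
  · intro S hS
    obtain ⟨hS', hsa⟩ := mem_filter.1 hS
    obtain ⟨hP, hc⟩ := mem_pgIndex.1 hS'
    refine mem_pgIndex.2 ⟨hP.erase_singleton ha hsa, ?_⟩
    rw [card_erase_of_mem hsa, hc]
    omega
  · intro T hT
    obtain ⟨hP, hc⟩ := mem_pgIndex.1 hT
    refine mem_filter.2 ⟨mem_pgIndex.2 ⟨hP.insert_singleton ha, ?_⟩, mem_insert_self _ _⟩
    rw [card_insert_of_notMem (hP.not_singleton_mem ha), hc]
  · intro S hS
    exact insert_erase (mem_filter.1 hS).2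
  · intro T hT
    exact erase_insert (((mem_pgIndex.1 hT).1).not_singleton_mem ha)
  · intro S hS
    exact (Finset.prod_erase S (by simp)).symm

open scoped Classical in
theorem case2_sum {s : Finset α} {a : α} (ha : a ∉ s) (m : ℕ) :
    ∑ S ∈ (((insert a s).powerset.powerset.filter
        fun S => IsPart (insert a s) S ∧ S.card = m + 1).filter
        fun S => ({a} : Finset α) ∉ S),
      ∏ A ∈ S, A.card.factorial
    = ∑ p ∈ ((s.powerset.powerset.filter
        fun T => IsPart s T ∧ T.card = m + 1).sigma fun T => T),
        (p.2.card + 1) * ∏ A ∈ p.1, A.card.factorial := by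
  refine Finset.sum_nbij'
    (fun S => ⟨insert ((blockOf S a).erase a) (S.erase (blockOf S a)), (blockOf S a).erase a⟩)
    (fun p => insert (insert a p.2) (p.1.erase p.2)) ?_ ?_ ?_ ?_ ?_
  · intro S hS
    obtain ⟨hS', hsa⟩ := mem_filter.1 hS
    obtain ⟨hP, hc⟩ := mem_pgIndex.1 hS'
    obtain ⟨hA, haA, hBne, hBS⟩ := case2_facts ha hP hsa
    refine mem_sigma.2 ⟨mem_pgIndex.2 ⟨case2_ispart_forward ha hP hsa, ?_⟩, mem_insert_self _ _⟩
    rw [card_insert_of_notMem (fun hm => hBS (mem_of_mem_erase hm)),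
      card_erase_of_mem hA, hc]
    omega
  · intro p hp
    obtain ⟨hT, hB⟩ := mem_sigma.1 hp
    obtain ⟨hP, hc⟩ := mem_pgIndex.1 hT
    obtain ⟨haB, hsub2, h2⟩ := case2_back_facts ha hP hB
    refine mem_filter.2 ⟨mem_pgIndex.2 ⟨case2_ispart_backward ha hP hB, ?_⟩, ?_⟩
    · rw [card_insert_of_notMem hsub2, card_erase_of_mem hB, hc]
      omega
    · intro hm
      rcases mem_insert.1 hm with h1 | h1
      · obtain ⟨x, hx⟩ := hP.1 p.2 hB
        have hxa : x ≠ a := fun hxa => ha (hxa ▸ hP.subset hB hx)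
        have : x ∈ ({a} : Finset α) := h1 ▸ mem_insert_of_mem hx
        exact hxa (mem_singleton.1 this)
      · exact ha (hP.subset (mem_of_mem_erase h1) (mem_singleton_self a))
  · intro S hS
    obtain ⟨hS', hsa⟩ := mem_filter.1 hS
    obtain ⟨hP, hc⟩ := mem_pgIndex.1 hS'
    obtain ⟨hA, haA, hBne, hBS⟩ := case2_facts ha hP hsa
    simp only
    rw [erase_insert (fun hm => hBS (mem_of_mem_erase hm)),
      insert_erase haA, insert_erase hA]
  · intro p hp
    obtain ⟨hT, hB⟩ := mem_sigma.1 hp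
    obtain ⟨hP, hc⟩ := mem_pgIndex.1 hT
    obtain ⟨haB, hsub2, h2⟩ := case2_back_facts ha hP hB
    have hblock : blockOf (insert (insert a p.2) (p.1.erase p.2)) a = insert a p.2 :=
      blockOf_eq (case2_ispart_backward ha hP hB) (mem_insert_self _ _) (mem_insert_self _ _)
    have h1 : (insert a p.2).erase a = p.2 := erase_insert haB
    obtain ⟨T, B⟩ := p
    simp only at hblock h1 hsub2 hB ⊢
    rw [hblock, h1, erase_insert hsub2, insert_erase hB]
  · intro S hS
    obtain ⟨hS', hsa⟩ := mem_filter.1 hS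
    obtain ⟨hP, hc⟩ := mem_pgIndex.1 hS'
    obtain ⟨hA, haA, hBne, hBS⟩ := case2_facts ha hP hsa
    simp only
    rw [Finset.prod_insert (fun hm => hBS (mem_of_mem_erase hm)),
      ← Finset.mul_prod_erase S _ hA]
    have hcard : (blockOf S a).card = ((blockOf S a).erase a).card + 1 := by
      rw [card_erase_of_mem haA]
      have : 1 ≤ (blockOf S a).card := card_pos.2 ⟨a, haA⟩
      omega
    rw [hcard, Nat.factorial_succ, mul_assoc]

open scoped Classical in
theorem sigma_sum_eval {s : Finset α} (M : ℕ) :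
    ∑ p ∈ ((s.powerset.powerset.filter
        fun T => IsPart s T ∧ T.card = M).sigma fun T => T),
        (p.2.card + 1) * ∏ A ∈ p.1, A.card.factorial
      = (s.card + M) * pg s M := by
  rw [Finset.sum_sigma, pg, Finset.mul_sum]
  refine Finset.sum_congr rfl ?_
  intro T hT
  obtain ⟨hP, hc⟩ := mem_pgIndex.1 hT
  have hcards : ∑ B ∈ T, B.card = s.card := by
    conv_rhs => rw [← hP.2.2]
    rw [show (T.biUnion id) = T.biUnion (fun A => A) from rfl,
      Finset.card_biUnion (fun A hA B hB hne => hP.2.1 A hA B hB hne)]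
  simp only
  rw [← Finset.sum_mul]
  congr 1
  rw [Finset.sum_add_distrib, hcards, Finset.sum_const, smul_eq_mul, mul_one, hc]

open scoped Classical in
theorem pg_insert {s : Finset α} {a : α} (ha : a ∉ s) (m : ℕ) :
    pg (insert a s) (m + 1) = pg s m + (s.card + (m + 1)) * pg s (m + 1) := by
  rw [pg, ← Finset.sum_filter_add_sum_filter_not _ (fun S => ({a} : Finset α) ∈ S),
    case1_sum ha m, case2_sum ha m, sigma_sum_eval]

theorem pg_empty (m : ℕ) : pg (∅ : Finset α) m = if m = 0 then 1 else 0 := by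
  classical
  rcases Nat.eq_zero_or_pos m with rfl | hm
  · rw [pg]
    have hidx : ((∅ : Finset α).powerset.powerset.filter
        fun S => IsPart ∅ S ∧ S.card = 0) = {∅} := by
      ext S
      rw [mem_pgIndex, mem_singleton]
      constructor
      · rintro ⟨hP, hc⟩
        exact card_eq_zero.1 hc
      · rintro rfl
        exact ⟨⟨fun A hA => absurd hA (notMem_empty A),
          fun A hA => absurd hA (notMem_empty A), by simp⟩, rfl⟩
    rw [hidx]
    simp
  · rw [pg, if_neg (Nat.pos_iff_ne_zero.1 hm)]
    convert Finset.sum_empty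
    rw [Finset.eq_empty_iff_forall_notMem]
    intro S hS
    obtain ⟨hP, hc⟩ := mem_pgIndex.1 hS
    have hSne : S.Nonempty := card_pos.1 (hc ▸ hm)
    obtain ⟨A, hA⟩ := hSne
    obtain ⟨x, hx⟩ := hP.1 A hA
    exact notMem_empty x (hP.subset hA hx)

theorem pg_zero_of_nonempty {s : Finset α} (hs : s.Nonempty) : pg s 0 = 0 := by
  classical
  rw [pg]
  convert Finset.sum_empty
  rw [Finset.eq_empty_iff_forall_notMem]
  intro S hS
  obtain ⟨hP, hc⟩ := mem_pgIndex.1 hS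
  obtain ⟨x, hx⟩ := hs
  rw [card_eq_zero.1 hc] at hP
  have := hP.2.2
  simp only [biUnion_empty] at this
  exact notMem_empty x (this ▸ hx)

def Lah : ℕ → ℕ → ℕ
  | 0, 0 => 1
  | 0, _ + 1 => 0
  | _ + 1, 0 => 0
  | n + 1, m + 1 => Lah n m + (n + (m + 1)) * Lah n (m + 1)

theorem pg_eq_lah (s : Finset α) (m : ℕ) : pg s m = Lah s.card m := by
  classical
  induction s using Finset.induction_on generalizing m with
  | empty =>
      rw [pg_empty, Finset.card_empty]
      cases m <;> simp [Lah]
  | @insert a s ha ih =>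
      rw [card_insert_of_notMem ha]
      cases m with
      | zero =>
          rw [pg_zero_of_nonempty (insert_nonempty a s)]
          rfl
      | succ m =>
          rw [pg_insert ha m, ih, ih]
          rfl

theorem lah_lt : ∀ n m : ℕ, n < m → Lah n m = 0 := by
  intro n
  induction n with
  | zero => intro m hm; cases m with
      | zero => omega
      | succ m => rfl
  | succ n ih =>
      intro m hm
      cases m with
      | zero => omega
      | succ m =>
          show Lah n m + (n + (m + 1)) * Lah n (m + 1) = 0
          rw [ih m (by omega), ih (m+1) (by omega)]
          simp

theorem lah_self : ∀ n : ℕ, Lah n n = 1 := by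
  intro n
  induction n with
  | zero => rfl
  | succ n ih =>
      show Lah n n + (n + (n + 1)) * Lah n (n + 1) = 1
      rw [ih, lah_lt n (n+1) (by omega)]
      simp

theorem key_id (n m : ℕ) (h : m + 1 ≤ n) :
    (m+2) * ((n+1).factorial * n.choose m) + (n+m+3) * ((n+1).factorial * n.choose (m+1))
      = (n+2).factorial * (n+1).choose (m+1) := by
  obtain ⟨k, rfl⟩ : ∃ k, n = m + 1 + k := ⟨n - (m+1), by omega⟩
  have hr : (m+1+k).choose (m+1) * (m+1) = (m+1+k).choose m * (k+1) := by
    have := Nat.choose_succ_right_eq (m+1+k) m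
    rw [show m+1+k - m = k+1 from by omega] at this
    exact this
  rw [show m+1+k+2 = (m+1+k+1)+1 from rfl, Nat.factorial_succ (m+1+k+1),
    Nat.choose_succ_succ]
  zify at hr ⊢
  linear_combination ((m+1+k+1).factorial : ℤ) * hr

theorem lah_key : ∀ n m : ℕ, m ≤ n →
    (m+1).factorial * Lah (n+1) (m+1) = (n+1).factorial * n.choose m := by
  intro n
  induction n with
  | zero =>
      intro m hm
      interval_cases m
      show 1 * Lah 1 1 = 1 * Nat.choose 0 0
      rw [lah_self]
      rfl
  | succ n ih =>
      intro m hm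
      cases m with
      | zero =>
          have h1 := ih 0 (Nat.zero_le n)
          show Nat.factorial 1 * (Lah (n+1) 0 + (n + 1 + 1) * Lah (n+1) 1) = _
          have h0 : Lah (n+1) 0 = 0 := rfl
          have h1' : Lah (n+1) 1 = (n+1).factorial := by
            simpa using h1
          simp only [Nat.choose_zero_right, mul_one, Nat.factorial_one, one_mul]
          rw [h0, zero_add, h1', Nat.factorial_succ (n+1)]
      | succ m =>
          have hmn : m ≤ n := by omega
          have ih1 := ih m hmn
          show (m+2).factorial * (Lah (n+1) (m+1) + (n + 1 + (m + 2)) * Lah (n+1) (m+2)) = _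
          rcases Nat.lt_or_ge m n with hlt | hge
          · have ih2 := ih (m+1) (by omega)
            have expand : (m+2).factorial * (Lah (n+1) (m+1) + (n + 1 + (m + 2)) * Lah (n+1) (m+2))
                = (m+2) * ((m+1).factorial * Lah (n+1) (m+1))
                  + (n+m+3) * ((m+2).factorial * Lah (n+1) (m+2)) := by
              rw [Nat.factorial_succ (m+1)]
              ring
            rw [expand, ih1, ih2]
            exact key_id n m (by omega)
          · have hmn' : m = n := by omega
            subst hmn'
            rw [lah_lt (m+1) (m+2) (by omega)]
            have hLs : Lah (m+1) (m+1) = 1 := lah_self (m+1)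
            rw [hLs]
            simp [Nat.choose_self]

theorem lah_closed (n m : ℕ) (hm1 : 1 ≤ m) (hmn : m ≤ n) :
    Lah n m = n.factorial / m.factorial * (n-1).choose (m-1) := by
  obtain ⟨m', rfl⟩ : ∃ m', m = m' + 1 := ⟨m - 1, by omega⟩
  obtain ⟨n', rfl⟩ : ∃ n', n = n' + 1 := ⟨n - 1, by omega⟩
  have hk := lah_key n' m' (by omega)
  obtain ⟨c, hc⟩ := Nat.factorial_dvd_factorial (show m' + 1 ≤ n' + 1 by omega)
  have hdiv : (n'+1).factorial / (m'+1).factorial = c := by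
    rw [hc, Nat.mul_div_cancel_left _ (Nat.factorial_pos _)]
  rw [hc] at hk
  have : Lah (n'+1) (m'+1) = c * n'.choose m' :=
    Nat.eq_of_mul_eq_mul_left (Nat.factorial_pos _) (by rw [hk]; ring)
  simpa [hdiv] using this

theorem cond_iff {N : ℕ} (m : ℕ) (S : Finset (Finset (Fin N))) :
    (∅ ∉ S ∧ (∀ x : Fin N, ∃! A, A ∈ S ∧ x ∈ A) ∧ S.card = m) ↔
      (IsPart (univ : Finset (Fin N)) S ∧ S.card = m) := by
  constructor
  · rintro ⟨hne, huniq, hc⟩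
    refine ⟨⟨?_, ?_, ?_⟩, hc⟩
    · intro A hA
      rw [Finset.nonempty_iff_ne_empty]
      rintro rfl
      exact hne hA
    · intro A hA B hB hAB
      rw [Finset.disjoint_left]
      intro x hxA hxB
      exact hAB ((huniq x).unique ⟨hA, hxA⟩ ⟨hB, hxB⟩)
    · ext x
      simp only [mem_biUnion, mem_univ, iff_true, id]
      obtain ⟨A, ⟨hA, hxA⟩, -⟩ := huniq x
      exact ⟨A, hA, hxA⟩
  · rintro ⟨hP, hc⟩
    refine ⟨?_, ?_, hc⟩
    · intro hm
      exact (hP.1 ∅ hm).ne_empty rfl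
    · intro x
      have hx : x ∈ (univ : Finset (Fin N)) := mem_univ x
      rw [← hP.2.2] at hx
      obtain ⟨A, hA, hxA⟩ := mem_biUnion.1 hx
      refine ⟨A, ⟨hA, hxA⟩, ?_⟩
      rintro B ⟨hB, hxB⟩
      exact hP.eq_of_mem hB hA hxB hxA

open scoped Classical in
/-- For integers `N ≥ 1` and `1 ≤ m ≤ N`, the sum over all partitions `S` of `{1,…,N}`
with exactly `m` blocks of `∏_{A ∈ S} |A|!` equals `(N!/m!) · C(N-1, m-1)`. -/
theorem sum_partitions_prod_factorial (N m : ℕ) (hN : 1 ≤ N) (hm1 : 1 ≤ m) (hmN : m ≤ N) :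
    (∑ S : Finset (Finset (Fin N)),
        if (∅ ∉ S ∧ (∀ x : Fin N, ∃! A, A ∈ S ∧ x ∈ A) ∧ S.card = m)
        then ∏ A ∈ S, Nat.factorial A.card else 0)
      = Nat.factorial N / Nat.factorial m * Nat.choose (N - 1) (m - 1) := by
  have h1 : (∑ S : Finset (Finset (Fin N)),
        if (∅ ∉ S ∧ (∀ x : Fin N, ∃! A, A ∈ S ∧ x ∈ A) ∧ S.card = m)
        then ∏ A ∈ S, Nat.factorial A.card else 0)
      = pg (univ : Finset (Fin N)) m := by
    rw [pg, Finset.powerset_univ, Finset.powerset_univ, Finset.sum_filter]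
    refine Finset.sum_congr rfl fun S _ => ?_
    exact if_congr (cond_iff m S) rfl rfl
  rw [h1, pg_eq_lah, Finset.card_univ, Fintype.card_fin,
    lah_closed N m hm1 hmN]
end

section
/- Let c₀ > 0 and suppose that for each finite index set A a weight w(A) ≥ 0 is given with w(A) ≤ c₀^{|A|} |A|!. Then there is a constant c (one may take c = c₀ e) such that for all N ≥ 1, Σ_{S ∈ π'(I_N)} Π_{A∈S} (c₀^{|A|} |A|!) ≤ c^N N!, where π'(I_N) is the set of partitions of {1,...,N} all of whose blocks have size at least 2. -/
open Finset
open scoped Classical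

variable {ι : Type*} [Fintype ι] [DecidableEq ι]

/-- `S` is a partition of `s` into blocks of size at least 2. -/
def PartNS (s : Finset ι) (S : Finset (Finset ι)) : Prop :=
  (∀ x ∈ s, ∃! A, A ∈ S ∧ x ∈ A) ∧ (∀ A ∈ S, A ⊆ s ∧ 2 ≤ A.card)

noncomputable def Fsum (c₀ : ℝ) (s : Finset ι) : ℝ :=
  ∑ S : Finset (Finset ι),
    if PartNS s S then ∏ A ∈ S, c₀ ^ A.card * (Nat.factorial A.card : ℝ) else 0

lemma Fsum_empty (c₀ : ℝ) : Fsum c₀ (∅ : Finset ι) = 1 := by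
  have h : ∀ S : Finset (Finset ι), PartNS (∅ : Finset ι) S ↔ S = ∅ := by
    intro S
    constructor
    · rintro ⟨-, h2⟩
      by_contra hS
      obtain ⟨A, hA⟩ := nonempty_iff_ne_empty.2 hS
      have h1 := (h2 A hA).2
      have h0 : A = ∅ := subset_empty.1 (h2 A hA).1
      rw [h0] at h1
      simp at h1
    · rintro rfl
      exact ⟨fun x hx => absurd hx (notMem_empty x), fun A hA => absurd hA (notMem_empty A)⟩
  rw [Fsum]
  rw [Finset.sum_congr rfl (fun S _ => if_congr (h S) rfl rfl)]
  simp

noncomputable def wgt (c₀ : ℝ) (S : Finset (Finset ι)) : ℝ :=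
  ∏ A ∈ S, c₀ ^ A.card * (Nat.factorial A.card : ℝ)

lemma Fsum_eq_filter (c₀ : ℝ) (s : Finset ι) :
    Fsum c₀ s = ∑ S ∈ univ.filter (fun S => PartNS s S), wgt c₀ S := by
  rw [Fsum, Finset.sum_filter]; rfl

lemma blockOf_spec {s : Finset ι} {S : Finset (Finset ι)} {x : ι}
    (hS : PartNS s S) (hx : x ∈ s) :
    S.filter (fun A => x ∈ A) = {(S.filter (fun A => x ∈ A)).sup id} ∧
      (S.filter (fun A => x ∈ A)).sup id ∈ S ∧ x ∈ (S.filter (fun A => x ∈ A)).sup id := by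
  obtain ⟨B₀, ⟨hB₀S, hxB₀⟩, huniq⟩ := hS.1 x hx
  have hfil : S.filter (fun A => x ∈ A) = {B₀} := by
    ext A
    simp only [mem_filter, mem_singleton]
    constructor
    · rintro ⟨h1, h2⟩; exact huniq A ⟨h1, h2⟩
    · rintro rfl; exact ⟨hB₀S, hxB₀⟩
  rw [hfil, Finset.sup_singleton]
  exact ⟨rfl, hB₀S, hxB₀⟩

lemma Fsum_rec (c₀ : ℝ) {s : Finset ι} {x : ι} (hx : x ∈ s) :
    Fsum c₀ s = ∑ B ∈ (s.erase x).powerset,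
      if B.Nonempty then
        c₀ ^ (B.card + 1) * (Nat.factorial (B.card + 1) : ℝ) * Fsum c₀ (s \ insert x B)
      else 0 := by
  rw [← Finset.sum_filter]
  set g : Finset (Finset ι) → Finset ι :=
    fun S => ((S.filter (fun A => x ∈ A)).sup id).erase x with hg
  rw [Fsum_eq_filter]
  have hmap : ∀ S ∈ univ.filter (fun S => PartNS s S),
      g S ∈ (s.erase x).powerset.filter (fun B => B.Nonempty) := by
    intro S hS
    rw [mem_filter] at hS
    obtain ⟨hfil, hBS, hxB⟩ := blockOf_spec hS.2 hx
    set B₀ := (S.filter (fun A => x ∈ A)).sup id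
    have hcard := (hS.2.2 B₀ hBS).2
    have hsub := (hS.2.2 B₀ hBS).1
    rw [mem_filter, mem_powerset]
    constructor
    · intro y hy
      rw [mem_erase] at hy ⊢
      exact ⟨hy.1, hsub hy.2⟩
    · rw [← Finset.card_pos, Finset.card_erase_of_mem hxB]
      omega
  rw [← Finset.sum_fiberwise_of_maps_to hmap (wgt c₀)]
  apply Finset.sum_congr rfl
  intro B hB
  rw [mem_filter, mem_powerset] at hB
  obtain ⟨hBsub, hBne⟩ := hB
  have hxnB : x ∉ B := fun h => (Finset.notMem_erase x s) (hBsub h)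
  set C : Finset ι := insert x B with hC
  have hxC : x ∈ C := mem_insert_self x B
  have hCcard : C.card = B.card + 1 := Finset.card_insert_of_notMem hxnB
  have hCs : C ⊆ s := by
    intro y hy
    rcases Finset.mem_insert.1 hy with rfl | hy
    · exact hx
    · exact Finset.mem_of_mem_erase (hBsub hy)
  rw [Fsum_eq_filter, Finset.mul_sum]
  refine Finset.sum_nbij' (fun S => S.erase C) (fun S' => insert C S') ?_ ?_ ?_ ?_ ?_
  · -- hi : erase C maps fibers to partitions of s \ C
    intro S hS
    simp only [mem_filter, mem_univ, true_and] at hS ⊢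
    obtain ⟨hPS, hgS⟩ := hS
    obtain ⟨hfil, hBS, hxB⟩ := blockOf_spec hPS hx
    set B₀ := (S.filter (fun A => x ∈ A)).sup id
    have hB₀C : B₀ = C := by
      rw [hg] at hgS
      rw [hC, ← hgS, Finset.insert_erase hxB]
    rw [hB₀C] at hBS
    constructor
    · -- coverage
      intro y hy
      rw [mem_sdiff] at hy
      obtain ⟨A, ⟨hAS, hyA⟩, huniq⟩ := hPS.1 y hy.1
      have hAC : A ≠ C := fun h => hy.2 (h ▸ hyA)
      refine ⟨A, ⟨Finset.mem_erase.2 ⟨hAC, hAS⟩, hyA⟩, ?_⟩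
      rintro A' ⟨hA', hyA'⟩
      exact huniq A' ⟨(Finset.mem_erase.1 hA').2, hyA'⟩
    · intro A hA
      have hAS := Finset.mem_of_mem_erase hA
      have hANC := (Finset.mem_erase.1 hA).1
      refine ⟨?_, (hPS.2 A hAS).2⟩
      intro y hy
      have hys : y ∈ s := (hPS.2 A hAS).1 hy
      rw [mem_sdiff]
      refine ⟨hys, fun hyC => ?_⟩
      obtain ⟨A', -, huniq⟩ := hPS.1 y hys
      have h1 := huniq A ⟨hAS, hy⟩
      have h2 := huniq C ⟨hBS, hyC⟩
      exact hANC (h1.trans h2.symm)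
  · -- hj : insert C maps partitions of s \ C to the fiber
    intro S' hS'
    simp only [mem_filter, mem_univ, true_and] at hS' ⊢
    have hsub' : ∀ A ∈ S', A ⊆ s \ C := fun A hA => (hS'.2 A hA).1
    have hxA' : ∀ A ∈ S', x ∉ A := by
      intro A hA h
      exact (Finset.mem_sdiff.1 (hsub' A hA h)).2 hxC
    constructor
    · constructor
      · -- coverage of s
        intro y hy
        by_cases hyC : y ∈ C
        · refine ⟨C, ⟨mem_insert_self _ _, hyC⟩, ?_⟩
          rintro A ⟨hA, hyA⟩
          rcases Finset.mem_insert.1 hA with rfl | hA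
          · rfl
          · exact absurd hyC (Finset.mem_sdiff.1 (hsub' A hA hyA)).2
        · obtain ⟨A, ⟨hAS, hyA⟩, huniq⟩ := hS'.1 y (Finset.mem_sdiff.2 ⟨hy, hyC⟩)
          refine ⟨A, ⟨Finset.mem_insert_of_mem hAS, hyA⟩, ?_⟩
          rintro A' ⟨hA', hyA'⟩
          rcases Finset.mem_insert.1 hA' with rfl | hA'
          · exact absurd hyA' hyC
          · exact huniq A' ⟨hA', hyA'⟩
      · -- blocks
        intro A hA
        rcases Finset.mem_insert.1 hA with rfl | hA
        · refine ⟨hCs, ?_⟩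
          rw [hCcard]
          have := Finset.card_pos.2 hBne
          omega
        · exact ⟨(hsub' A hA).trans (Finset.sdiff_subset), (hS'.2 A hA).2⟩
    · -- g (insert C S') = B
      have hfil : (insert C S').filter (fun A => x ∈ A) = {C} := by
        ext A
        simp only [mem_filter, mem_singleton, Finset.mem_insert]
        constructor
        · rintro ⟨rfl | hA, hxA⟩
          · rfl
          · exact absurd hxA (hxA' A hA)
        · rintro rfl; exact ⟨Or.inl rfl, hxC⟩
      rw [hg]
      simp only [hfil, Finset.sup_singleton, id]
      rw [hC, Finset.erase_insert hxnB]
  · -- left inverse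
    intro S hS
    simp only [mem_filter, mem_univ, true_and] at hS
    obtain ⟨hPS, hgS⟩ := hS
    obtain ⟨hfil, hBS, hxB⟩ := blockOf_spec hPS hx
    have hB₀C : (S.filter (fun A => x ∈ A)).sup id = C := by
      rw [hg] at hgS
      rw [hC, ← hgS, Finset.insert_erase hxB]
    rw [hB₀C] at hBS
    exact Finset.insert_erase hBS
  · -- right inverse
    intro S' hS'
    simp only [mem_filter, mem_univ, true_and] at hS'
    have hCS' : C ∉ S' := by
      intro h
      exact (Finset.mem_sdiff.1 ((hS'.2 C h).1 hxC)).2 hxC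
    exact Finset.erase_insert hCS'
  · -- weights
    intro S hS
    simp only [mem_filter, mem_univ, true_and] at hS
    obtain ⟨hPS, hgS⟩ := hS
    obtain ⟨hfil, hBS, hxB⟩ := blockOf_spec hPS hx
    have hB₀C : (S.filter (fun A => x ∈ A)).sup id = C := by
      rw [hg] at hgS
      rw [hC, ← hgS, Finset.insert_erase hxB]
    rw [hB₀C] at hBS
    have : wgt c₀ S = wgt c₀ (insert C (S.erase C)) := by rw [Finset.insert_erase hBS]
    rw [this, wgt, Finset.prod_insert (Finset.notMem_erase C S), hCcard]
    rfl

lemma Fsum_le {c₀ : ℝ} (hc₀ : 0 < c₀) (n : ℕ) :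
    ∀ s : Finset ι, s.card = n → Fsum c₀ s ≤ (c₀ * Real.exp 1) ^ n * (Nat.factorial n : ℝ) := by
  induction n using Nat.strong_induction_on with
  | _ n IH =>
    intro s hs
    set E := Real.exp 1 with hE
    have hE1 : (1 : ℝ) ≤ E := Real.one_le_exp (by norm_num)
    have hE2 : (2 : ℝ) ≤ E := by
      have := Real.add_one_le_exp (1 : ℝ)
      linarith
    have hE0 : (0 : ℝ) < E := Real.exp_pos 1
    rcases s.eq_empty_or_nonempty with rfl | ⟨x, hx⟩
    · rw [Finset.card_empty] at hs
      subst hs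
      rw [Fsum_empty]
      simp
    · have hn : 1 ≤ n := hs ▸ Finset.card_pos.2 ⟨x, hx⟩
      rw [Fsum_rec c₀ hx]
      have herase : (s.erase x).card = n - 1 := by
        rw [Finset.card_erase_of_mem hx, hs]
      -- step 1 : bound each summand using the induction hypothesis
      have step1 : ∑ B ∈ (s.erase x).powerset,
            (if B.Nonempty then
              c₀ ^ (B.card + 1) * (Nat.factorial (B.card + 1) : ℝ) * Fsum c₀ (s \ insert x B)
            else 0)
          ≤ ∑ B ∈ (s.erase x).powerset,
            (if B.card ≠ 0 then
              c₀ ^ (B.card + 1) * (Nat.factorial (B.card + 1) : ℝ) *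
                ((c₀ * E) ^ (n - (B.card + 1)) * (Nat.factorial (n - (B.card + 1)) : ℝ))
            else 0) := by
        apply Finset.sum_le_sum
        intro B hB
        rw [mem_powerset] at hB
        by_cases hBne : B.Nonempty
        · have hBcard : B.card ≠ 0 := Finset.card_ne_zero.2 hBne
          rw [if_pos hBne, if_pos hBcard]
          have hxnB : x ∉ B := fun h => (Finset.notMem_erase x s) (hB h)
          have hCs : insert x B ⊆ s := by
            intro y hy
            rcases Finset.mem_insert.1 hy with rfl | hy
            · exact hx
            · exact Finset.mem_of_mem_erase (hB hy)
          have hcard : (s \ insert x B).card = n - (B.card + 1) := by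
            rw [Finset.card_sdiff_of_subset hCs, Finset.card_insert_of_notMem hxnB, hs]
          have hlt : n - (B.card + 1) < n := Nat.sub_lt (by omega) (Nat.succ_pos _)
          have := IH _ hlt (s \ insert x B) hcard
          have hpos : (0:ℝ) ≤ c₀ ^ (B.card + 1) * (Nat.factorial (B.card + 1) : ℝ) :=
            mul_nonneg (pow_nonneg hc₀.le _) (Nat.cast_nonneg _)
          exact mul_le_mul_of_nonneg_left this hpos
        · have h0 : B.card = 0 := by
            rw [Finset.card_eq_zero]
            exact Finset.not_nonempty_iff_eq_empty.mp hBne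
          rw [if_neg hBne, if_neg (fun h => h h0)]
      refine step1.trans ?_
      -- step 2 : group by cardinality
      rw [Finset.sum_powerset_apply_card
        (fun m => if m ≠ 0 then c₀ ^ (m + 1) * (Nat.factorial (m + 1) : ℝ) *
          ((c₀ * E) ^ (n - (m + 1)) * (Nat.factorial (n - (m + 1)) : ℝ)) else 0)]
      rw [herase]
      have hrange : n - 1 + 1 = n := by omega
      rw [hrange]
      -- step 3 : per-term bound
      have step3 : ∀ m ∈ Finset.range n,
          (n - 1).choose m •
            (if m ≠ 0 then c₀ ^ (m + 1) * (Nat.factorial (m + 1) : ℝ) *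
              ((c₀ * E) ^ (n - (m + 1)) * (Nat.factorial (n - (m + 1)) : ℝ)) else 0)
          ≤ c₀ ^ n * E ^ (n - 1) * (Nat.factorial (n - 1) : ℝ) := by
        intro m hm
        rw [Finset.mem_range] at hm
        by_cases hm0 : m = 0
        · rw [hm0, if_neg (fun h : (0:ℕ) ≠ 0 => h rfl), smul_zero]
          positivity
        · rw [if_pos hm0, nsmul_eq_mul]
          have hmn : m ≤ n - 1 := by omega
          set k := n - (m + 1) with hk
          have hk' : n - 1 - m = k := by omega
          have hmk : k + m = n - 1 := by omega
          -- nat identity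
          have hnat : ((n - 1).choose m : ℝ) * (Nat.factorial (m + 1) : ℝ) *
              (Nat.factorial k : ℝ) = (m + 1 : ℝ) * (Nat.factorial (n - 1) : ℝ) := by
            have h1 : (n - 1).choose m * Nat.factorial m * Nat.factorial (n - 1 - m)
                = Nat.factorial (n - 1) := Nat.choose_mul_factorial_mul_factorial hmn
            rw [hk'] at h1
            have h2 : (n - 1).choose m * Nat.factorial (m + 1) * Nat.factorial k
                = (m + 1) * Nat.factorial (n - 1) := by
              rw [Nat.factorial_succ]
              rw [← h1]
              ring
            calc ((n - 1).choose m : ℝ) * (Nat.factorial (m + 1) : ℝ) * (Nat.factorial k : ℝ)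
                = ((((n - 1).choose m * Nat.factorial (m + 1) * Nat.factorial k : ℕ)) : ℝ) := by
                  push_cast; ring
              _ = (((m + 1) * Nat.factorial (n - 1) : ℕ) : ℝ) := by rw [h2]
              _ = (m + 1 : ℝ) * (Nat.factorial (n - 1) : ℝ) := by push_cast; ring
          have hm1E : (m : ℝ) + 1 ≤ E ^ m := by
            have h2m : (m : ℝ) + 1 ≤ 2 ^ m := by
              have := Nat.lt_two_pow_self (n := m)
              have : (m + 1 : ℕ) ≤ 2 ^ m := this
              calc (m : ℝ) + 1 = ((m + 1 : ℕ) : ℝ) := by push_cast; ring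
                _ ≤ ((2 ^ m : ℕ) : ℝ) := by exact_mod_cast this
                _ = 2 ^ m := by push_cast; ring
            calc (m : ℝ) + 1 ≤ 2 ^ m := h2m
              _ ≤ E ^ m := pow_le_pow_left₀ (by norm_num) hE2 m
          have hc₀pow : c₀ ^ (m + 1) * (c₀ * E) ^ k = c₀ ^ n * E ^ k := by
            rw [mul_pow, ← mul_assoc, ← pow_add]
            congr 2
            omega
          calc ((n - 1).choose m : ℝ) *
                (c₀ ^ (m + 1) * (Nat.factorial (m + 1) : ℝ) * ((c₀ * E) ^ k * (Nat.factorial k : ℝ)))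
              = (c₀ ^ (m + 1) * (c₀ * E) ^ k) *
                (((n - 1).choose m : ℝ) * (Nat.factorial (m + 1) : ℝ) * (Nat.factorial k : ℝ)) := by
                ring
            _ = (c₀ ^ n * E ^ k) * ((m + 1 : ℝ) * (Nat.factorial (n - 1) : ℝ)) := by
                rw [hc₀pow, hnat]
            _ ≤ (c₀ ^ n * E ^ k) * (E ^ m * (Nat.factorial (n - 1) : ℝ)) := by
                apply mul_le_mul_of_nonneg_left _ (by positivity)
                exact mul_le_mul_of_nonneg_right hm1E (Nat.cast_nonneg _)
            _ = c₀ ^ n * E ^ (k + m) * (Nat.factorial (n - 1) : ℝ) := by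
                rw [pow_add]; ring
            _ = c₀ ^ n * E ^ (n - 1) * (Nat.factorial (n - 1) : ℝ) := by
                rw [hmk]
      calc ∑ m ∈ Finset.range n, (n - 1).choose m •
              (if m ≠ 0 then c₀ ^ (m + 1) * (Nat.factorial (m + 1) : ℝ) *
                ((c₀ * E) ^ (n - (m + 1)) * (Nat.factorial (n - (m + 1)) : ℝ)) else 0)
            ≤ ∑ m ∈ Finset.range n, c₀ ^ n * E ^ (n - 1) * (Nat.factorial (n - 1) : ℝ) :=
              Finset.sum_le_sum step3
        _ = n * (c₀ ^ n * E ^ (n - 1) * (Nat.factorial (n - 1) : ℝ)) := by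
              rw [Finset.sum_const, Finset.card_range, nsmul_eq_mul]
        _ ≤ (c₀ * E) ^ n * (Nat.factorial n : ℝ) := by
              rw [mul_pow]
              have hfact : (n : ℝ) * (Nat.factorial (n - 1) : ℝ) = (Nat.factorial n : ℝ) := by
                rw [← Nat.cast_mul, Nat.mul_factorial_pred (by omega)]
              have hEpow : E ^ (n - 1) ≤ E ^ n :=
                pow_le_pow_right₀ hE1 (by omega)
              calc (n : ℝ) * (c₀ ^ n * E ^ (n - 1) * (Nat.factorial (n - 1) : ℝ))
                  = c₀ ^ n * E ^ (n - 1) * ((n : ℝ) * (Nat.factorial (n - 1) : ℝ)) := by ring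
                _ = c₀ ^ n * E ^ (n - 1) * (Nat.factorial n : ℝ) := by rw [hfact]
                _ ≤ c₀ ^ n * E ^ n * (Nat.factorial n : ℝ) := by
                    apply mul_le_mul_of_nonneg_right _ (Nat.cast_nonneg _)
                    exact mul_le_mul_of_nonneg_left hEpow (by positivity)

open scoped Classical in
/-- Cluster combinatorics bound: for `c₀ > 0` and `N ≥ 1`, the sum over all partitions of
`{1,…,N}` without singleton blocks of `∏_{A} c₀^{|A|} |A|!` is at most `(c₀ e)^N N!`.
(In particular any weights `w(A) ≤ c₀^{|A|}|A|!` obey the same bound.) -/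
theorem sum_partitions_no_singletons_bound (c₀ : ℝ) (hc₀ : 0 < c₀) (N : ℕ) (hN : 1 ≤ N) :
    (∑ S : Finset (Finset (Fin N)),
        if (∅ ∉ S ∧ (∀ x : Fin N, ∃! A, A ∈ S ∧ x ∈ A) ∧ (∀ A ∈ S, 2 ≤ A.card))
        then ∏ A ∈ S, c₀ ^ A.card * (Nat.factorial A.card : ℝ) else 0)
      ≤ (c₀ * Real.exp 1) ^ N * (Nat.factorial N : ℝ) := by
  have hiff : ∀ S : Finset (Finset (Fin N)),
      (∅ ∉ S ∧ (∀ x : Fin N, ∃! A, A ∈ S ∧ x ∈ A) ∧ (∀ A ∈ S, 2 ≤ A.card))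
        ↔ PartNS (Finset.univ : Finset (Fin N)) S := by
    intro S
    constructor
    · rintro ⟨h1, h2, h3⟩
      exact ⟨fun x _ => h2 x, fun A hA => ⟨Finset.subset_univ A, h3 A hA⟩⟩
    · rintro ⟨h1, h2⟩
      refine ⟨fun h => ?_, fun x => h1 x (Finset.mem_univ x), fun A hA => (h2 A hA).2⟩
      have := (h2 ∅ h).2
      simp at this
  have heq : (∑ S : Finset (Finset (Fin N)),
      if (∅ ∉ S ∧ (∀ x : Fin N, ∃! A, A ∈ S ∧ x ∈ A) ∧ (∀ A ∈ S, 2 ≤ A.card))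
      then ∏ A ∈ S, c₀ ^ A.card * (Nat.factorial A.card : ℝ) else 0)
      = Fsum c₀ (Finset.univ : Finset (Fin N)) := by
    rw [Fsum]
    exact Finset.sum_congr rfl fun S _ => if_congr (hiff S) rfl rfl
  rw [heq]
  exact Fsum_le hc₀ N Finset.univ (by simp)
end

section
/- Let a₀ > 0 and for λ ∈ (0,1) define N₀(λ) = max(1, ⌊a₀ |ln λ| / ln⟨ln λ⟩⌋), where ⟨x⟩ = √(1+x²). Let c, c' > 0, n₁, n₂, n₃ ∈ ℕ₊, p₁, p₂ ∈ ℝ be constants with p₁ - a₀(p₂ + n₁n₂ + n₃) > 0. Then c^{N₀(λ)} λ^{p₁} N₀(λ)^{p₂ N₀(λ) + c'} ((n₁ N₀(λ))!)^{n₂} ⟨ln λ⟩^{n₃ N₀(λ) + c'} → 0 as λ → 0⁺. -/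
open Filter Real

open Topology

noncomputable def Mf (L : ℝ) : ℝ := Real.log (Real.sqrt (1 + L ^ 2))
noncomputable def Nf (a₀ L : ℝ) : ℕ := max 1 ⌊a₀ * L / Mf L⌋₊

lemma Mf_nonneg (L : ℝ) : 0 ≤ Mf L :=
  Real.log_nonneg (Real.one_le_sqrt.2 (by nlinarith [sq_nonneg L]))

lemma sqrt_pos' (L : ℝ) : 0 < Real.sqrt (1 + L ^ 2) :=
  Real.sqrt_pos.2 (by positivity)

lemma log_le_Mf {L : ℝ} (hL : 1 ≤ L) : Real.log L ≤ Mf L := by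
  apply Real.log_le_log (by linarith)
  have h1 : L = Real.sqrt (L ^ 2) := (Real.sqrt_sq (by linarith)).symm
  rw [h1]
  exact Real.sqrt_le_sqrt (by nlinarith)

lemma Mf_le {L : ℝ} (hL : 1 ≤ L) : Mf L ≤ Real.log L + 1 := by
  have h2 : Real.sqrt (1 + L ^ 2) ≤ Real.sqrt 2 * L := by
    rw [show Real.sqrt 2 * L = Real.sqrt (2 * L ^ 2) by
      rw [Real.sqrt_mul (by norm_num), Real.sqrt_sq (by linarith)]]
    exact Real.sqrt_le_sqrt (by nlinarith)
  have h3 : Mf L ≤ Real.log (Real.sqrt 2 * L) := Real.log_le_log (sqrt_pos' L) h2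
  rw [Real.log_mul (by positivity) (by linarith)] at h3
  have h4 : Real.log (Real.sqrt 2) ≤ 1 := by
    calc Real.log (Real.sqrt 2) ≤ Real.sqrt 2 - 1 :=
      Real.log_le_sub_one_of_pos (by positivity)
    _ ≤ 1 := by nlinarith [Real.sq_sqrt (by norm_num : (2:ℝ) ≥ 0), Real.sqrt_nonneg 2]
  linarith

lemma hM_top : Tendsto Mf atTop atTop := by
  apply tendsto_atTop_mono' atTop (eventually_atTop.2 ⟨1, fun L hL => log_le_Mf hL⟩)
    Real.tendsto_log_atTop

lemma hlogL_div_L : Tendsto (fun L : ℝ => Real.log L / L) atTop (𝓝 0) :=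
  Real.isLittleO_log_id_atTop.tendsto_div_nhds_zero

lemma hM_div_logL : Tendsto (fun L => Mf L / Real.log L) atTop (𝓝 1) := by
  apply tendsto_of_tendsto_of_tendsto_of_le_of_le' (g := fun _ => (1:ℝ))
    (h := fun L => 1 + (Real.log L)⁻¹) tendsto_const_nhds
  · simpa using tendsto_const_nhds.add Real.tendsto_log_atTop.inv_tendsto_atTop
  · filter_upwards [eventually_ge_atTop (3:ℝ)] with L hL
    have h1 : (1:ℝ) < Real.log L := by
      have := Real.exp_one_lt_d9
      calc (1:ℝ) = Real.log (Real.exp 1) := by rw [Real.log_exp]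
      _ < Real.log L := Real.log_lt_log (Real.exp_pos 1) (by linarith)
    rw [le_div_iff₀ (by linarith)]
    have := log_le_Mf (by linarith : (1:ℝ) ≤ L)
    linarith
  · filter_upwards [eventually_ge_atTop (3:ℝ)] with L hL
    have h1 : (1:ℝ) < Real.log L := by
      have := Real.exp_one_lt_d9
      calc (1:ℝ) = Real.log (Real.exp 1) := by rw [Real.log_exp]
      _ < Real.log L := Real.log_lt_log (Real.exp_pos 1) (by linarith)
    rw [div_le_iff₀ (by linarith)]
    have := Mf_le (by linarith : (1:ℝ) ≤ L)
    have h2 : (1 + (Real.log L)⁻¹) * Real.log L = Real.log L + 1 := by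
      field_simp
    linarith [h2]

lemma hlogL_div_M : Tendsto (fun L => Real.log L / Mf L) atTop (𝓝 1) := by
  have h := hM_div_logL.inv₀ one_ne_zero
  simpa [inv_div] using h

lemma hM_div_L : Tendsto (fun L => Mf L / L) atTop (𝓝 0) := by
  have h := hM_div_logL.mul hlogL_div_L
  rw [one_mul] at h
  apply h.congr'
  filter_upwards [eventually_ge_atTop (3:ℝ)] with L hL
  have h1 : Real.log L ≠ 0 := by
    have : (0:ℝ) < Real.log L := Real.log_pos (by linarith)
    linarith
  field_simp

lemma hQ_top (a₀ : ℝ) (ha₀ : 0 < a₀) :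
    Tendsto (fun L => a₀ * L / Mf L) atTop atTop := by
  have h0 : Tendsto (fun L => Mf L / L) atTop (𝓝[>] 0) := by
    rw [tendsto_nhdsWithin_iff]
    refine ⟨hM_div_L, ?_⟩
    filter_upwards [eventually_ge_atTop (3:ℝ)] with L hL
    have hM : 0 < Mf L := lt_of_lt_of_le (Real.log_pos (by linarith)) (log_le_Mf (by linarith))
    exact div_pos hM (by linarith)
  have h1 : Tendsto (fun L => (Mf L / L)⁻¹) atTop atTop := h0.inv_tendsto_nhdsGT_zero
  have h2 := h1.const_mul_atTop ha₀
  apply h2.congr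
  intro L
  rw [inv_div, mul_div_assoc]

-- bundle of eventual facts
lemma hEv (a₀ : ℝ) (ha₀ : 0 < a₀) : ∀ᶠ L in atTop, 0 < L ∧ 0 < Mf L ∧
    2 ≤ a₀ * L / Mf L ∧ (Nf a₀ L : ℝ) ≤ a₀ * L / Mf L ∧
    a₀ * L / Mf L - 1 < (Nf a₀ L : ℝ) := by
  filter_upwards [eventually_ge_atTop (3:ℝ), (hQ_top a₀ ha₀).eventually_ge_atTop 2]
    with L hL hQ
  have hM : 0 < Mf L := lt_of_lt_of_le (Real.log_pos (by linarith)) (log_le_Mf (by linarith))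
  refine ⟨by linarith, hM, hQ, ?_, ?_⟩
  · have h1 : (1:ℕ) ≤ ⌊a₀ * L / Mf L⌋₊ := Nat.le_floor (by exact_mod_cast (by linarith : (1:ℝ) ≤ a₀ * L / Mf L))
    have h2 : Nf a₀ L = ⌊a₀ * L / Mf L⌋₊ := max_eq_right h1
    rw [h2]
    exact Nat.floor_le (by linarith)
  · have h3 : a₀ * L / Mf L < ⌊a₀ * L / Mf L⌋₊ + 1 := Nat.lt_floor_add_one _
    have h4 : (⌊a₀ * L / Mf L⌋₊ : ℝ) ≤ (Nf a₀ L : ℝ) := by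
      exact_mod_cast Nat.cast_le.2 (le_max_right 1 _)
    linarith

lemma hNM (a₀ : ℝ) (ha₀ : 0 < a₀) :
    Tendsto (fun L => (Nf a₀ L : ℝ) * Mf L / L) atTop (𝓝 a₀) := by
  apply tendsto_of_tendsto_of_tendsto_of_le_of_le' (g := fun L => a₀ - Mf L / L)
    (h := fun _ => a₀)
  · simpa using tendsto_const_nhds.sub hM_div_L
  · exact tendsto_const_nhds
  · filter_upwards [hEv a₀ ha₀] with L ⟨hL, hM, hQ2, hNle, hNgt⟩
    have key : a₀ * L < ((Nf a₀ L : ℝ) + 1) * Mf L := by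
      have := (div_lt_iff₀ hM).1 (by linarith : a₀ * L / Mf L < (Nf a₀ L : ℝ) + 1)
      linarith
    have : a₀ ≤ (Nf a₀ L : ℝ) * Mf L / L + Mf L / L := by
      rw [← add_div, le_div_iff₀ hL]
      nlinarith
    linarith
  · filter_upwards [hEv a₀ ha₀] with L ⟨hL, hM, hQ2, hNle, hNgt⟩
    rw [div_le_iff₀ hL]
    have := (le_div_iff₀ hM).1 hNle
    linarith

lemma hinvM : Tendsto (fun L => (Mf L)⁻¹) atTop (𝓝 0) := hM_top.inv_tendsto_atTop

lemma hlogM_div_M : Tendsto (fun L => Real.log (Mf L) / Mf L) atTop (𝓝 0) :=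
  hlogL_div_L.comp hM_top

lemma hlogN_div_M (a₀ : ℝ) (ha₀ : 0 < a₀) :
    Tendsto (fun L => Real.log (Nf a₀ L) / Mf L) atTop (𝓝 1) := by
  apply tendsto_of_tendsto_of_tendsto_of_le_of_le'
    (g := fun L => (Real.log a₀ - Real.log 2) * (Mf L)⁻¹ + Real.log L / Mf L - Real.log (Mf L) / Mf L)
    (h := fun L => Real.log a₀ * (Mf L)⁻¹ + Real.log L / Mf L - Real.log (Mf L) / Mf L)
  · have := ((hinvM.const_mul (Real.log a₀ - Real.log 2)).add hlogL_div_M).sub hlogM_div_M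
    simpa using this
  · have := ((hinvM.const_mul (Real.log a₀)).add hlogL_div_M).sub hlogM_div_M
    simpa using this
  · filter_upwards [hEv a₀ ha₀, eventually_ge_atTop (3:ℝ)] with L ⟨hL, hM, hQ2, hNle, hNgt⟩ hL3
    have hQhalf : a₀ * L / Mf L / 2 ≤ (Nf a₀ L : ℝ) := by linarith
    have hQpos : 0 < a₀ * L / Mf L := by linarith
    have hlog1 : Real.log (a₀ * L / Mf L / 2) ≤ Real.log (Nf a₀ L) :=
      Real.log_le_log (by positivity) hQhalf
    have hexp : Real.log (a₀ * L / Mf L / 2) =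
        Real.log a₀ + Real.log L - Real.log (Mf L) - Real.log 2 := by
      rw [Real.log_div (by positivity) (by norm_num), Real.log_div (by positivity) (by linarith),
        Real.log_mul (ne_of_gt ha₀) (by linarith)]
    have hre : (Real.log a₀ - Real.log 2) * (Mf L)⁻¹ + Real.log L / Mf L - Real.log (Mf L) / Mf L
        = (Real.log a₀ + Real.log L - Real.log (Mf L) - Real.log 2) / Mf L := by
      field_simp
      ring
    rw [hre]
    exact div_le_div_of_nonneg_right (by linarith) (le_of_lt hM)
  · filter_upwards [hEv a₀ ha₀, eventually_ge_atTop (3:ℝ)] with L ⟨hL, hM, hQ2, hNle, hNgt⟩ hL3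
    have hNpos : (0:ℝ) < (Nf a₀ L : ℝ) := by
      have : (1:ℕ) ≤ Nf a₀ L := le_max_left 1 _
      exact_mod_cast this
    have hlog1 : Real.log (Nf a₀ L) ≤ Real.log (a₀ * L / Mf L) := Real.log_le_log hNpos hNle
    have hexp : Real.log (a₀ * L / Mf L) = Real.log a₀ + Real.log L - Real.log (Mf L) := by
      rw [Real.log_div (by positivity) (by linarith), Real.log_mul (ne_of_gt ha₀) (by linarith)]
    have hre : Real.log a₀ * (Mf L)⁻¹ + Real.log L / Mf L - Real.log (Mf L) / Mf L
        = (Real.log a₀ + Real.log L - Real.log (Mf L)) / Mf L := by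
      field_simp
    rw [hre]
    exact div_le_div_of_nonneg_right (by linarith) (le_of_lt hM)

lemma hNlogN (a₀ : ℝ) (ha₀ : 0 < a₀) :
    Tendsto (fun L => (Nf a₀ L : ℝ) * Real.log (Nf a₀ L) / L) atTop (𝓝 a₀) := by
  have h := (hNM a₀ ha₀).mul (hlogN_div_M a₀ ha₀)
  rw [mul_one] at h
  apply h.congr'
  filter_upwards [hEv a₀ ha₀] with L ⟨hL, hM, _, _, _⟩
  field_simp

lemma hN_div_L (a₀ : ℝ) (ha₀ : 0 < a₀) :
    Tendsto (fun L => (Nf a₀ L : ℝ) / L) atTop (𝓝 0) := by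
  have h := (hNM a₀ ha₀).mul hinvM
  rw [mul_zero] at h
  apply h.congr'
  filter_upwards [hEv a₀ ha₀] with L ⟨hL, hM, _, _, _⟩
  field_simp

lemma hlogN_div_L (a₀ : ℝ) (ha₀ : 0 < a₀) :
    Tendsto (fun L => Real.log (Nf a₀ L) / L) atTop (𝓝 0) := by
  apply tendsto_of_tendsto_of_tendsto_of_le_of_le' (g := fun _ => (0:ℝ))
    (h := fun L => (Nf a₀ L : ℝ) / L) tendsto_const_nhds (hN_div_L a₀ ha₀)
  · filter_upwards [eventually_gt_atTop (0:ℝ)] with L hL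
    have hN1 : (1:ℝ) ≤ (Nf a₀ L : ℝ) := by exact_mod_cast (le_max_left 1 _ : 1 ≤ Nf a₀ L)
    positivity
  · filter_upwards [eventually_gt_atTop (0:ℝ)] with L hL
    apply div_le_div_of_nonneg_right _ (le_of_lt hL)
    exact Real.log_le_self (by positivity)

noncomputable def Uf (a₀ c c' : ℝ) (n₁ n₂ n₃ : ℕ) (p₁ p₂ : ℝ) (L : ℝ) : ℝ :=
  (Nf a₀ L : ℝ) * Real.log c - L * p₁ + (p₂ * (Nf a₀ L : ℝ) + c') * Real.log (Nf a₀ L)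
    + (n₂ : ℝ) * (((n₁ * Nf a₀ L : ℕ) : ℝ) * Real.log ((n₁ * Nf a₀ L : ℕ) : ℝ))
    + ((n₃ : ℝ) * (Nf a₀ L : ℝ) + c') * Mf L

lemma hU_bot (a₀ : ℝ) (ha₀ : 0 < a₀) (c c' : ℝ) (n₁ n₂ n₃ : ℕ) (hn₁ : 0 < n₁)
    (p₁ p₂ : ℝ) (hp : 0 < p₁ - a₀ * (p₂ + (n₁ : ℝ) * n₂ + n₃)) :
    Tendsto (Uf a₀ c c' n₁ n₂ n₃ p₁ p₂) atTop atBot := by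
  set ε := p₁ - a₀ * (p₂ + (n₁ : ℝ) * n₂ + n₃) with hε
  have hdiv : Tendsto (fun L => Uf a₀ c c' n₁ n₂ n₃ p₁ p₂ L / L) atTop (𝓝 (-ε)) := by
    have hV : Tendsto (fun L =>
        Real.log c * ((Nf a₀ L : ℝ) / L) - p₁
        + p₂ * ((Nf a₀ L : ℝ) * Real.log (Nf a₀ L) / L)
        + c' * (Real.log (Nf a₀ L) / L)
        + (n₂ : ℝ) * (n₁ : ℝ) * Real.log n₁ * ((Nf a₀ L : ℝ) / L)
        + (n₂ : ℝ) * (n₁ : ℝ) * ((Nf a₀ L : ℝ) * Real.log (Nf a₀ L) / L)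
        + (n₃ : ℝ) * ((Nf a₀ L : ℝ) * Mf L / L)
        + c' * (Mf L / L)) atTop
        (𝓝 (Real.log c * 0 - p₁ + p₂ * a₀ + c' * 0 + (n₂ : ℝ) * (n₁ : ℝ) * Real.log n₁ * 0
          + (n₂ : ℝ) * (n₁ : ℝ) * a₀ + (n₃ : ℝ) * a₀ + c' * 0)) := by
      exact ((((((((hN_div_L a₀ ha₀).const_mul _).sub_const p₁).add
        ((hNlogN a₀ ha₀).const_mul p₂)).add ((hlogN_div_L a₀ ha₀).const_mul c')).add
        ((hN_div_L a₀ ha₀).const_mul _)).add ((hNlogN a₀ ha₀).const_mul _)).add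
        ((hNM a₀ ha₀).const_mul _)).add (hM_div_L.const_mul c')
    have heq : (Real.log c * 0 - p₁ + p₂ * a₀ + c' * 0 + (n₂ : ℝ) * (n₁ : ℝ) * Real.log n₁ * 0
          + (n₂ : ℝ) * (n₁ : ℝ) * a₀ + (n₃ : ℝ) * a₀ + c' * 0) = -ε := by
      rw [hε]; ring
    rw [heq] at hV
    apply hV.congr'
    filter_upwards [eventually_gt_atTop (0:ℝ)] with L hL
    have hN1 : (1:ℕ) ≤ Nf a₀ L := le_max_left 1 _
    have hNpos : (0:ℝ) < (Nf a₀ L : ℝ) := by exact_mod_cast hN1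
    have hcast : ((n₁ * Nf a₀ L : ℕ) : ℝ) = (n₁ : ℝ) * (Nf a₀ L : ℝ) := by push_cast; ring
    rw [Uf, hcast, Real.log_mul (by exact_mod_cast hn₁.ne') (ne_of_gt hNpos)]
    field_simp
    ring
  have h2 : Tendsto (fun L => Uf a₀ c c' n₁ n₂ n₃ p₁ p₂ L / L * L) atTop atBot :=
    Tendsto.neg_mul_atTop (by linarith : -ε < 0) hdiv tendsto_id
  apply h2.congr'
  filter_upwards [eventually_ne_atTop (0:ℝ)] with L hL
  exact div_mul_cancel₀ _ hL

lemma key (a₀ : ℝ) (ha₀ : 0 < a₀) (c c' : ℝ) (hc : 0 < c) (hc' : 0 < c')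
    (n₁ n₂ n₃ : ℕ) (hn₁ : 0 < n₁) (hn₂ : 0 < n₂) (hn₃ : 0 < n₃)
    (p₁ p₂ : ℝ) (hp : 0 < p₁ - a₀ * (p₂ + (n₁ : ℝ) * n₂ + n₃)) :
    Tendsto (fun L : ℝ =>
        c ^ Nf a₀ L * Real.exp (-(L * p₁)) * (Nf a₀ L : ℝ) ^ (p₂ * (Nf a₀ L : ℝ) + c')
          * ((Nat.factorial (n₁ * Nf a₀ L) : ℝ)) ^ n₂
          * Real.sqrt (1 + L ^ 2) ^ ((n₃ : ℝ) * (Nf a₀ L : ℝ) + c'))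
      atTop (𝓝 0) := by
  apply tendsto_of_tendsto_of_tendsto_of_le_of_le' (g := fun _ => (0:ℝ))
    (h := fun L => Real.exp (Uf a₀ c c' n₁ n₂ n₃ p₁ p₂ L)) tendsto_const_nhds
  · have := Real.tendsto_exp_atBot.comp (hU_bot a₀ ha₀ c c' n₁ n₂ n₃ hn₁ p₁ p₂ hp)
    exact this
  · apply Eventually.of_forall
    intro L
    have hN1 : (1:ℕ) ≤ Nf a₀ L := le_max_left 1 _
    have hNpos : (0:ℝ) < (Nf a₀ L : ℝ) := by exact_mod_cast hN1
    positivity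
  · apply Eventually.of_forall
    intro L
    set N := Nf a₀ L with hN
    have hN1 : (1:ℕ) ≤ N := le_max_left 1 _
    have hNpos : (0:ℝ) < (N : ℝ) := by exact_mod_cast hN1
    have hm1 : (1:ℕ) ≤ n₁ * N := Nat.one_le_iff_ne_zero.2 (by positivity)
    have hmpos : (0:ℝ) < ((n₁ * N : ℕ) : ℝ) := by exact_mod_cast hm1
    have e1 : c ^ N = Real.exp ((N : ℝ) * Real.log c) := by
      rw [Real.exp_nat_mul, Real.exp_log hc]
    have e2 : (N : ℝ) ^ (p₂ * (N : ℝ) + c') = Real.exp ((p₂ * (N : ℝ) + c') * Real.log N) := by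
      rw [Real.rpow_def_of_pos hNpos, mul_comm]
    have e3 : Real.sqrt (1 + L ^ 2) ^ ((n₃ : ℝ) * (N : ℝ) + c')
        = Real.exp (((n₃ : ℝ) * (N : ℝ) + c') * Mf L) := by
      rw [Real.rpow_def_of_pos (sqrt_pos' L), Mf, mul_comm]
    have e4 : ((Nat.factorial (n₁ * N) : ℝ)) ^ n₂
        ≤ Real.exp ((n₂ : ℝ) * (((n₁ * N : ℕ) : ℝ) * Real.log ((n₁ * N : ℕ) : ℝ))) := by
      have h1 : ((Nat.factorial (n₁ * N) : ℝ)) ≤ ((n₁ * N : ℕ) : ℝ) ^ (n₁ * N : ℕ) := by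
        exact_mod_cast Nat.factorial_le_pow (n₁ * N)
      have h2 : ((n₁ * N : ℕ) : ℝ) ^ (n₁ * N : ℕ)
          = Real.exp (((n₁ * N : ℕ) : ℝ) * Real.log ((n₁ * N : ℕ) : ℝ)) := by
        conv_lhs => rw [← Real.exp_log hmpos]
        rw [← Real.exp_nat_mul]
      calc ((Nat.factorial (n₁ * N) : ℝ)) ^ n₂
          ≤ (((n₁ * N : ℕ) : ℝ) ^ (n₁ * N : ℕ)) ^ n₂ := by
            exact pow_le_pow_left₀ (by positivity) h1 n₂
        _ = Real.exp ((n₂ : ℝ) * (((n₁ * N : ℕ) : ℝ) * Real.log ((n₁ * N : ℕ) : ℝ))) := by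
            rw [h2, ← Real.exp_nat_mul]
    rw [Uf]
    rw [Real.exp_add, Real.exp_add, Real.exp_add, Real.exp_sub, ← hN]
    rw [e1, e2, e3]
    have hle : Real.exp ((N:ℝ) * Real.log c) * Real.exp (-(L * p₁))
        = Real.exp ((N:ℝ) * Real.log c) / Real.exp (L * p₁) := by
      rw [Real.exp_neg, div_eq_mul_inv]
    rw [hle]
    gcongr

/-- Decay of the expansion parameters (equation (5.4) of the paper).  With
`N₀(λ) = max(1, ⌊a₀|ln λ|/ln⟨ln λ⟩⌋)` and constants `c, c' > 0`, `n₁, n₂, n₃ ∈ ℕ₊`,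
`p₁, p₂ ∈ ℝ` satisfying `p₁ - a₀(p₂ + n₁n₂ + n₃) > 0`, one has
`c^{N₀(λ)} λ^{p₁} N₀(λ)^{p₂N₀(λ)+c'} ((n₁N₀(λ))!)^{n₂} ⟨ln λ⟩^{n₃N₀(λ)+c'} → 0`
as `λ → 0⁺`. -/
theorem expansion_parameter_decay
    (a₀ : ℝ) (ha₀ : 0 < a₀) (c c' : ℝ) (hc : 0 < c) (hc' : 0 < c')
    (n₁ n₂ n₃ : ℕ) (hn₁ : 0 < n₁) (hn₂ : 0 < n₂) (hn₃ : 0 < n₃)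
    (p₁ p₂ : ℝ) (hp : 0 < p₁ - a₀ * (p₂ + (n₁ : ℝ) * n₂ + n₃)) :
    Tendsto (fun lam : ℝ =>
        (letI N₀ : ℕ := max 1 ⌊a₀ * |Real.log lam| /
            Real.log (Real.sqrt (1 + Real.log lam ^ 2))⌋₊
        c ^ N₀ * lam ^ p₁ * (N₀ : ℝ) ^ (p₂ * N₀ + c')
          * ((Nat.factorial (n₁ * N₀) : ℝ)) ^ n₂
          * Real.sqrt (1 + Real.log lam ^ 2) ^ ((n₃ : ℝ) * N₀ + c')))
      (nhdsWithin 0 (Set.Ioi 0)) (nhds 0) := by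
  have hlog : Tendsto (fun lam : ℝ => -Real.log lam) (nhdsWithin 0 (Set.Ioi 0)) atTop :=
    tendsto_neg_atBot_atTop.comp Real.tendsto_log_nhdsGT_zero
  have hcomp := (key a₀ ha₀ c c' hc hc' n₁ n₂ n₃ hn₁ hn₂ hn₃ p₁ p₂ hp).comp hlog
  apply hcomp.congr'
  have hmem : Set.Ioo (0:ℝ) 1 ∈ nhdsWithin (0:ℝ) (Set.Ioi 0) :=
    Ioo_mem_nhdsGT (by norm_num : (0:ℝ) < 1)
  filter_upwards [hmem] with lam ⟨h0, h1⟩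
  have hlogneg : Real.log lam < 0 := Real.log_neg h0 h1
  have habs : |Real.log lam| = -Real.log lam := abs_of_neg hlogneg
  have hsq : (-Real.log lam) ^ 2 = Real.log lam ^ 2 := by ring
  have hNeq : Nf a₀ (-Real.log lam) = max 1 ⌊a₀ * |Real.log lam| /
      Real.log (Real.sqrt (1 + Real.log lam ^ 2))⌋₊ := by
    rw [Nf, Mf, hsq, habs]
  have hrpow : lam ^ p₁ = Real.exp (-(-Real.log lam * p₁)) := by
    rw [Real.rpow_def_of_pos h0]; ring_nf
  simp only [Function.comp_apply, hNeq, hsq, hrpow]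
end

section
/- Let M ≥ 0 and let T ∈ (ℝ₊)^M, s > 0, α ∈ ℝ with |α| ≤ s, and δ ∈ (0,1). Then ∫_{(ℝ₊)^M} dt 𝟙(Σ_{i=1}^M t_i ≤ s) ⟨Σ_{i=1}^M t_i + α⟩^{-1-δ} ≤ ∫_0^s dT T^{M-1}/(M-1)! · ⟨T+α⟩^{-1-δ} for M ≥ 1, and moreover for M ≥ 2, ∫_0^s dT T^{M-1} ⟨T+α⟩^{-1-δ} ≤ s^{M-2} ( ∫_0^s dT ⟨T+α⟩^{-δ} + |α| ∫_0^s dT ⟨T+α⟩^{-1-δ} ) ≤ C s^{M-2}(s^{1-δ'} + |α|) for δ' = min(δ, 1/2) and a constant C depending only on δ. -/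
open MeasureTheory intervalIntegral Set


noncomputable def ker (p x : ℝ) : ℝ := Real.sqrt (1 + x ^ 2) ^ (-p)

lemma one_le_sq (x : ℝ) : 1 ≤ Real.sqrt (1 + x ^ 2) := by
  have := Real.sqrt_le_sqrt (show (1:ℝ) ≤ 1 + x ^ 2 by nlinarith [sq_nonneg x])
  simpa using this

lemma ker_cont (p : ℝ) : Continuous (ker p) := by
  apply Continuous.rpow_const
  · exact Real.continuous_sqrt.comp (by continuity)
  · intro x; left; positivity

lemma ker_nonneg (p x : ℝ) : 0 ≤ ker p x := by unfold ker; positivity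

lemma ker_le_one (p x : ℝ) (hp : 0 ≤ p) : ker p x ≤ 1 :=
  Real.rpow_le_one_of_one_le_of_nonpos (one_le_sq x) (by linarith)

lemma abs_le_sq (x : ℝ) : |x| ≤ Real.sqrt (1 + x ^ 2) := by
  rw [← Real.sqrt_sq_eq_abs]
  exact Real.sqrt_le_sqrt (by nlinarith)

lemma ker_le_rpow (p x : ℝ) (hp : 0 ≤ p) (hx : 0 < x) : ker p x ≤ x ^ (-p) := by
  unfold ker
  apply Real.rpow_le_rpow_of_nonpos hx (le_trans (le_abs_self x) (abs_le_sq x)) (by linarith)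

lemma ker_ii (p : ℝ) (α a b : ℝ) : IntervalIntegrable (fun T => ker p (T + α)) volume a b :=
  ((ker_cont p).comp (by continuity)).intervalIntegrable a b

lemma part2 (δ : ℝ) (hδ0 : 0 < δ) (M : ℕ) (hM : 2 ≤ M) (s α : ℝ) (hs : 0 < s) :
    (∫ T in (0:ℝ)..s, T ^ (M - 1) * ker (1+δ) (T + α))
      ≤ s ^ (M - 2) * ((∫ T in (0:ℝ)..s, ker δ (T + α))
          + |α| * ∫ T in (0:ℝ)..s, ker (1+δ) (T + α)) := by
  have key : ∀ T ∈ Set.Icc (0:ℝ) s,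
      T ^ (M - 1) * ker (1+δ) (T + α)
        ≤ s ^ (M - 2) * (ker δ (T + α) + |α| * ker (1+δ) (T + α)) := by
    intro T hT
    have h1 : T ^ (M - 1) ≤ s ^ (M - 2) * T := by
      have : M - 1 = (M - 2) + 1 := by omega
      rw [this, pow_succ]
      gcongr <;> first | exact hT.1 | exact hT.2
    have h2 : T * ker (1+δ) (T + α) ≤ ker δ (T + α) + |α| * ker (1+δ) (T + α) := by
      have hy : T ≤ Real.sqrt (1 + (T + α) ^ 2) + |α| := by
        have := abs_le_sq (T + α)
        have : T + α ≤ Real.sqrt (1 + (T + α) ^ 2) := le_trans (le_abs_self _) this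
        have := neg_abs_le α
        linarith
      have hker : Real.sqrt (1 + (T + α) ^ 2) * ker (1+δ) (T + α) = ker δ (T + α) := by
        unfold ker
        rw [← Real.rpow_one_add' (by positivity) (by intro h; nlinarith)]
        ring_nf
      calc T * ker (1+δ) (T + α)
          ≤ (Real.sqrt (1 + (T + α) ^ 2) + |α|) * ker (1+δ) (T + α) := by
            apply mul_le_mul_of_nonneg_right hy (ker_nonneg _ _)
        _ = ker δ (T + α) + |α| * ker (1+δ) (T + α) := by rw [add_mul, hker]
    calc T ^ (M - 1) * ker (1+δ) (T + α) ≤ (s ^ (M - 2) * T) * ker (1+δ) (T + α) := by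
          apply mul_le_mul_of_nonneg_right h1 (ker_nonneg _ _)
      _ = s ^ (M - 2) * (T * ker (1+δ) (T + α)) := by ring
      _ ≤ s ^ (M - 2) * (ker δ (T + α) + |α| * ker (1+δ) (T + α)) := by
          apply mul_le_mul_of_nonneg_left h2 (by positivity)
  have hi1 : IntervalIntegrable (fun T => T ^ (M-1) * ker (1+δ) (T + α)) volume 0 s := by
    apply Continuous.intervalIntegrable
    exact (continuous_pow _).mul ((ker_cont _).comp (by continuity))
  have hi2 : IntervalIntegrable
      (fun T => s ^ (M - 2) * (ker δ (T + α) + |α| * ker (1+δ) (T + α))) volume 0 s := by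
    apply Continuous.intervalIntegrable
    apply continuous_const.mul
    exact ((ker_cont _).comp (by continuity)).add
      (continuous_const.mul ((ker_cont _).comp (by continuity)))
  calc (∫ T in (0:ℝ)..s, T ^ (M - 1) * ker (1+δ) (T + α))
      ≤ ∫ T in (0:ℝ)..s, s ^ (M - 2) * (ker δ (T + α) + |α| * ker (1+δ) (T + α)) :=
        intervalIntegral.integral_mono_on hs.le hi1 hi2 key
    _ = s ^ (M - 2) * ((∫ T in (0:ℝ)..s, ker δ (T + α))
          + |α| * ∫ T in (0:ℝ)..s, ker (1+δ) (T + α)) := by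
        rw [intervalIntegral.integral_const_mul, intervalIntegral.integral_add (ker_ii _ _ _ _)
          ((ker_ii _ _ _ _).const_mul _), intervalIntegral.integral_const_mul]

lemma ker_even (p x : ℝ) : ker p (-x) = ker p x := by unfold ker; rw [neg_pow]; ring_nf

lemma ker_ii' (p a b : ℝ) : IntervalIntegrable (ker p) volume a b :=
  (ker_cont p).intervalIntegrable a b

lemma shift_bound (p : ℝ) (s α : ℝ) (hs : 0 < s) (hα : |α| ≤ s) :
    (∫ T in (0:ℝ)..s, ker p (T + α)) ≤ 2 * ∫ u in (0:ℝ)..(2*s), ker p u := by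
  have habs := abs_le.mp hα
  have h1 : (∫ T in (0:ℝ)..s, ker p (T + α)) = ∫ u in α..(s+α), ker p u := by
    simpa using intervalIntegral.integral_comp_add_right (ker p) α
  have hnn : 0 ≤ᵐ[volume.restrict (Set.Ioc (-s) (2*s))] ker p :=
    Filter.Eventually.of_forall (fun x => ker_nonneg p x)
  have h2 : (∫ u in α..(s+α), ker p u) ≤ ∫ u in (-s)..(2*s), ker p u :=
    intervalIntegral.integral_mono_interval (by linarith) (by linarith) (by linarith)
      hnn (ker_ii' p _ _)
  have h3 : (∫ u in (-s)..(0:ℝ), ker p u) + (∫ u in (0:ℝ)..(2*s), ker p u)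
      = ∫ u in (-s)..(2*s), ker p u :=
    intervalIntegral.integral_add_adjacent_intervals (ker_ii' p _ _) (ker_ii' p _ _)
  have h4 : (∫ u in (-s)..(0:ℝ), ker p u) = ∫ u in (0:ℝ)..s, ker p u := by
    have := intervalIntegral.integral_comp_neg (a := (0:ℝ)) (b := s) (ker p)
    simp only [neg_zero] at this
    rw [← this]
    exact intervalIntegral.integral_congr (fun x _ => ker_even p x)
  have h5 : (∫ u in (0:ℝ)..s, ker p u) ≤ ∫ u in (0:ℝ)..(2*s), ker p u :=
    intervalIntegral.integral_mono_interval le_rfl hs.le (by linarith)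
      (Filter.Eventually.of_forall (fun x => ker_nonneg p x)) (ker_ii' p _ _)
  linarith

lemma bound_kd (δ δ' : ℝ) (hδ'0 : 0 < δ') (hδ'1 : δ' < 1) (hδ'δ : δ' ≤ δ) (b : ℝ) (hb : 0 ≤ b) :
    (∫ u in (0:ℝ)..b, ker δ u) ≤ b ^ (1 - δ') / (1 - δ') := by
  have hint : IntervalIntegrable (fun u : ℝ => u ^ (-δ')) volume 0 b :=
    intervalIntegral.intervalIntegrable_rpow' (by linarith)
  have hmono : (∫ u in (0:ℝ)..b, ker δ u) ≤ ∫ u in (0:ℝ)..b, u ^ (-δ') := by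
    rw [intervalIntegral.integral_of_le hb, intervalIntegral.integral_of_le hb]
    apply setIntegral_mono_on ((ker_ii' δ 0 b).1.mono_set (by simp [Set.uIoc_of_le hb]))
      (hint.1.mono_set (by simp [Set.uIoc_of_le hb])) measurableSet_Ioc
    intro u hu
    calc ker δ u ≤ ker δ' u := by
          unfold ker
          exact Real.rpow_le_rpow_of_exponent_le (one_le_sq u) (by linarith)
      _ ≤ u ^ (-δ') := ker_le_rpow δ' u hδ'0.le hu.1
  have hval : (∫ u in (0:ℝ)..b, u ^ (-δ')) = b ^ (1 - δ') / (1 - δ') := by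
    rw [integral_rpow (Or.inl (by linarith))]
    rw [Real.zero_rpow (by linarith), sub_zero]
    norm_num [sub_eq_add_neg, add_comm]
  linarith [hmono, hval.le, hval.ge]

lemma bound_k1d (δ : ℝ) (hδ0 : 0 < δ) (b : ℝ) (hb : 0 ≤ b) :
    (∫ u in (0:ℝ)..b, ker (1 + δ) u) ≤ 1 + 1/δ := by
  have h1δ : (0:ℝ) ≤ 1 + δ := by linarith
  have bdd : ∀ c d : ℝ, 0 ≤ c → c ≤ d →
      (∫ u in c..d, ker (1 + δ) u) ≤ d - c := by
    intro c d hc hcd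
    calc (∫ u in c..d, ker (1 + δ) u) ≤ ∫ _u in c..d, (1:ℝ) :=
          intervalIntegral.integral_mono_on hcd (ker_ii' _ _ _)
            (intervalIntegrable_const) (fun x _ => ker_le_one _ x h1δ)
      _ = d - c := by simp
  rcases le_or_gt b 1 with hb1 | hb1
  · have := bdd 0 b le_rfl hb
    have : (∫ u in (0:ℝ)..b, ker (1+δ) u) ≤ b := by simpa using this
    have h01 : (0:ℝ) ≤ 1/δ := by positivity
    linarith
  · have hsplit : (∫ u in (0:ℝ)..1, ker (1+δ) u) + (∫ u in (1:ℝ)..b, ker (1+δ) u)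
        = ∫ u in (0:ℝ)..b, ker (1+δ) u :=
      intervalIntegral.integral_add_adjacent_intervals (ker_ii' _ _ _) (ker_ii' _ _ _)
    have hA : (∫ u in (0:ℝ)..1, ker (1+δ) u) ≤ 1 := by simpa using bdd 0 1 le_rfl zero_le_one
    have hcont : ContinuousOn (fun u : ℝ => u ^ (-(1+δ))) (Set.uIcc 1 b) := by
      intro x hx
      rw [Set.uIcc_of_le hb1.le] at hx
      exact (Real.continuousAt_rpow_const x _ (Or.inl (by linarith [hx.1]))).continuousWithinAt
    have hint : IntervalIntegrable (fun u : ℝ => u ^ (-(1+δ))) volume 1 b :=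
      hcont.intervalIntegrable
    have hB : (∫ u in (1:ℝ)..b, ker (1+δ) u) ≤ ∫ u in (1:ℝ)..b, u ^ (-(1+δ)) := by
      rw [intervalIntegral.integral_of_le hb1.le, intervalIntegral.integral_of_le hb1.le]
      apply setIntegral_mono_on ((ker_ii' _ 1 b).1.mono_set (by simp [Set.uIoc_of_le hb1.le]))
        (hint.1.mono_set (by simp [Set.uIoc_of_le hb1.le])) measurableSet_Ioc
      intro u hu
      exact ker_le_rpow _ u h1δ (by linarith [hu.1])
    have hval : (∫ u in (1:ℝ)..b, u ^ (-(1+δ))) = (b ^ (-δ) - 1) / (-δ) := by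
      rw [integral_rpow (Or.inr ⟨by intro h; nlinarith, by
        rw [Set.uIcc_of_le hb1.le]; intro h; exact absurd h.1 (by norm_num)⟩)]
      norm_num [show -(1+δ)+1 = -δ by ring]
    have hBval : (∫ u in (1:ℝ)..b, u ^ (-(1+δ))) ≤ 1/δ := by
      rw [hval, show (b ^ (-δ) - 1) / (-δ) = (1 - b ^ (-δ)) / δ by ring]
      have h0 : 0 ≤ b ^ (-δ) := Real.rpow_nonneg (by linarith) _
      gcongr
      linarith
    linarith


lemma lemA (g : ℝ → ℝ) (hg : Continuous g) (n : ℕ) (s : ℝ) (hs : 0 ≤ s) :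
    (∫ x in (0:ℝ)..s, ∫ T in (0:ℝ)..(s - x), T ^ n / (n.factorial : ℝ) * g (T + x))
      = ∫ u in (0:ℝ)..s, u ^ (n+1) / ((n+1).factorial : ℝ) * g u := by
  classical
  set K : ℝ → ℝ → ℝ := fun x u => if x < u then (u - x) ^ n / (n.factorial : ℝ) * g u else 0
    with hK
  obtain ⟨B, hB⟩ : ∃ B : ℝ, ∀ y ∈ Icc (0:ℝ) s, ‖g y‖ ≤ B :=
    isCompact_Icc.exists_bound_of_continuousOn hg.continuousOn
  have hBnn : 0 ≤ B := le_trans (norm_nonneg _) (hB 0 (by simp [hs]))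
  have hKint : ∀ x a b : ℝ, IntervalIntegrable (K x) volume a b := by
    intro x a b
    rw [intervalIntegrable_iff]
    have hfe : K x = (Ioi x).indicator (fun u => (u - x) ^ n / (n.factorial : ℝ) * g u) := by
      funext u
      simp [hK, Set.indicator_apply]
    rw [hfe]
    exact (intervalIntegrable_iff.mp (Continuous.intervalIntegrable (by fun_prop) a b)).indicator
      measurableSet_Ioi
  have hKint' : ∀ u a b : ℝ, IntervalIntegrable (fun x => K x u) volume a b := by
    intro u a b
    rw [intervalIntegrable_iff]
    have hfe : (fun x => K x u)
        = (Iio u).indicator (fun x => (u - x) ^ n / (n.factorial : ℝ) * g u) := by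
      funext x
      simp [hK, Set.indicator_apply]
    rw [hfe]
    exact (intervalIntegrable_iff.mp (Continuous.intervalIntegrable (by fun_prop) a b)).indicator
      measurableSet_Iio
  have step1 : ∀ x ∈ Icc (0:ℝ) s,
      (∫ T in (0:ℝ)..(s - x), T ^ n / (n.factorial : ℝ) * g (T + x))
        = ∫ u in (0:ℝ)..s, K x u := by
    intro x hx
    have h1 : (∫ T in (0:ℝ)..(s - x), T ^ n / (n.factorial : ℝ) * g (T + x))
        = ∫ u in x..s, (u - x) ^ n / (n.factorial : ℝ) * g u := by
      have := intervalIntegral.integral_comp_add_right (a := (0:ℝ)) (b := s - x)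
        (fun u => (u - x) ^ n / (n.factorial : ℝ) * g u) x
      simp only [add_sub_cancel_right, zero_add, sub_add_cancel] at this
      rw [← this]
    have hz : (∫ u in (0:ℝ)..x, K x u) = 0 := by
      rw [integral_of_le hx.1]
      rw [setIntegral_congr_fun measurableSet_Ioc
        (g := fun _ => (0:ℝ)) (fun u hu => if_neg (not_lt.2 hu.2))]
      simp
    have he : (∫ u in x..s, K x u) = ∫ u in x..s, (u - x) ^ n / (n.factorial : ℝ) * g u := by
      rw [integral_of_le hx.2, integral_of_le hx.2]
      exact setIntegral_congr_fun measurableSet_Ioc (fun u hu => if_pos hu.1)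
    have hsplit := integral_add_adjacent_intervals (hKint x 0 x) (hKint x x s)
    rw [h1, ← hsplit, hz, he, zero_add]
  have step2 : ∀ u ∈ Ioc (0:ℝ) s,
      (∫ x in (0:ℝ)..s, K x u) = u ^ (n+1) / ((n+1).factorial : ℝ) * g u := by
    intro u hu
    have hane : ∀ᵐ (x : ℝ), x ≠ u := by
      rw [ae_iff]
      simpa using measure_singleton u
    have h1 : (∫ x in (0:ℝ)..u, K x u)
        = ∫ x in (0:ℝ)..u, (u - x) ^ n / (n.factorial : ℝ) * g u := by
      rw [integral_of_le hu.1.le, integral_of_le hu.1.le]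
      apply setIntegral_congr_ae measurableSet_Ioc
      filter_upwards [hane] with x hx hmem
      exact if_pos (lt_of_le_of_ne hmem.2 hx)
    have h2 : (∫ x in u..s, K x u) = 0 := by
      rw [integral_of_le hu.2]
      rw [setIntegral_congr_fun measurableSet_Ioc
        (g := fun _ => (0:ℝ)) (fun x hx => if_neg (not_lt.2 hx.1.le))]
      simp
    have h3 : (∫ x in (0:ℝ)..u, (u - x) ^ n / (n.factorial : ℝ) * g u)
        = u ^ (n+1) / ((n+1).factorial : ℝ) * g u := by
      have hc : (∫ x in (0:ℝ)..u, (u - x) ^ n) = u ^ (n+1) / (n+1) := by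
        have := intervalIntegral.integral_comp_sub_left (a := (0:ℝ)) (b := u)
          (fun y => y ^ n) u
        simp only [sub_self, sub_zero] at this
        rw [this, integral_pow]
        simp
      have : (∫ x in (0:ℝ)..u, (u - x) ^ n / (n.factorial : ℝ) * g u)
          = (∫ x in (0:ℝ)..u, (u - x) ^ n) * (g u / (n.factorial : ℝ)) := by
        rw [← intervalIntegral.integral_mul_const]
        congr 1
        funext x
        ring
      rw [this, hc]
      have hfac : ((n+1).factorial : ℝ) = (n+1) * (n.factorial : ℝ) := by
        rw [Nat.factorial_succ]
        push_cast
        ring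
      rw [hfac]
      have h1 : (n.factorial : ℝ) ≠ 0 := Nat.cast_ne_zero.mpr n.factorial_ne_zero
      have h2 : ((n:ℝ)+1) ≠ 0 := by positivity
      field_simp
    have hsplit := integral_add_adjacent_intervals (hKint' u 0 u) (hKint' u u s)
    rw [← hsplit, h1, h2, h3, add_zero]
  -- Fubini
  haveI : IsFiniteMeasure (volume.restrict (Ioc (0:ℝ) s)) :=
    ⟨by rw [Measure.restrict_apply_univ]; exact measure_Ioc_lt_top⟩
  have hmeas : AEStronglyMeasurable (Function.uncurry K)
      ((volume.restrict (Ioc (0:ℝ) s)).prod (volume.restrict (Ioc (0:ℝ) s))) := by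
    apply Measurable.aestronglyMeasurable
    apply Measurable.ite (measurableSet_lt measurable_fst measurable_snd) _ measurable_const
    exact (((measurable_snd.sub measurable_fst).pow_const n).div_const _).mul
      (hg.measurable.comp measurable_snd)
  have hint : Integrable (Function.uncurry K)
      ((volume.restrict (Ioc (0:ℝ) s)).prod (volume.restrict (Ioc (0:ℝ) s))) := by
    apply Integrable.mono' (integrable_const (s ^ n / (n.factorial : ℝ) * B)) hmeas
    have hpr : (volume.restrict (Ioc (0:ℝ) s)).prod (volume.restrict (Ioc (0:ℝ) s))
        = ((volume.prod volume)).restrict (Ioc (0:ℝ) s ×ˢ Ioc (0:ℝ) s) :=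
      Measure.prod_restrict _ _
    rw [hpr]
    filter_upwards [ae_restrict_mem (measurableSet_Ioc.prod measurableSet_Ioc)] with p hp
    obtain ⟨hp1, hp2⟩ := hp
    show ‖K p.1 p.2‖ ≤ _
    simp only [hK]
    split_ifs with h
    · rw [norm_mul, norm_div]
      have h1 : ‖(p.2 - p.1) ^ n‖ ≤ s ^ n := by
        rw [norm_pow]
        apply pow_le_pow_left₀ (norm_nonneg _)
        rw [Real.norm_eq_abs, abs_le]
        constructor <;> [linarith [hp1.1.le, hp2.2]; linarith [hp1.1.le, hp2.2]]
      have h2 : ‖g p.2‖ ≤ B := hB p.2 ⟨hp2.1.le, hp2.2⟩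
      have hfac : ‖(n.factorial : ℝ)‖ = (n.factorial : ℝ) := by
        rw [Real.norm_eq_abs, abs_of_pos]
        exact_mod_cast n.factorial_pos
      rw [hfac]
      have hfp : (0:ℝ) < (n.factorial : ℝ) := by exact_mod_cast n.factorial_pos
      apply mul_le_mul _ h2 (norm_nonneg _) (by positivity)
      gcongr
    · simp only [norm_zero]
      positivity
  calc (∫ x in (0:ℝ)..s, ∫ T in (0:ℝ)..(s - x), T ^ n / (n.factorial : ℝ) * g (T + x))
      = ∫ x in (0:ℝ)..s, ∫ u in (0:ℝ)..s, K x u := by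
        apply intervalIntegral.integral_congr
        rw [uIcc_of_le hs]
        exact step1
    _ = ∫ x in Ioc (0:ℝ) s, ∫ u in Ioc (0:ℝ) s, K x u := by
        rw [integral_of_le hs]
        simp_rw [integral_of_le hs]
    _ = ∫ u in Ioc (0:ℝ) s, ∫ x in Ioc (0:ℝ) s, K x u := integral_integral_swap hint
    _ = ∫ u in Ioc (0:ℝ) s, u ^ (n+1) / ((n+1).factorial : ℝ) * g u := by
        apply setIntegral_congr_fun measurableSet_Ioc
        intro u hu
        simp only
        rw [← integral_of_le hs]
        exact step2 u hu
    _ = ∫ u in (0:ℝ)..s, u ^ (n+1) / ((n+1).factorial : ℝ) * g u := (integral_of_le hs).symm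


lemma sum_meas (n : ℕ) : Measurable (fun t : Fin n → ℝ => ∑ i, t i) :=
  Finset.measurable_sum _ (fun i _ => measurable_pi_apply i)

lemma simplex_meas (n : ℕ) (s : ℝ) :
    MeasurableSet {t : Fin n → ℝ | (∀ i, 0 ≤ t i) ∧ ∑ i, t i ≤ s} := by
  have : {t : Fin n → ℝ | (∀ i, 0 ≤ t i) ∧ ∑ i, t i ≤ s}
      = (⋂ i, {t | 0 ≤ t i}) ∩ {t | ∑ i, t i ≤ s} := by ext; simp [Set.mem_iInter]
  rw [this]
  exact (MeasurableSet.iInter fun i =>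
      measurableSet_le measurable_const (measurable_pi_apply i)).inter
    (measurableSet_le (sum_meas n) measurable_const)

lemma lemB_base (g : ℝ → ℝ) (hg : Continuous g) (s α : ℝ) (hs : 0 ≤ s) :
    (∫ t in {t : Fin 1 → ℝ | (∀ i, 0 ≤ t i) ∧ ∑ i, t i ≤ s}, g (∑ i, t i + α))
      = ∫ T in (0:ℝ)..s, g (T + α) := by
  have mp : MeasurePreserving (MeasurableEquiv.funUnique (Fin 1) ℝ).symm
      (volume : Measure ℝ) (volume : Measure (Fin 1 → ℝ)) :=
    (volume_preserving_funUnique (Fin 1) ℝ).symm _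
  rw [← mp.setIntegral_preimage_emb (MeasurableEquiv.measurableEmbedding _)]
  have hset : (MeasurableEquiv.funUnique (Fin 1) ℝ).symm ⁻¹'
      {t : Fin 1 → ℝ | (∀ i, 0 ≤ t i) ∧ ∑ i, t i ≤ s} = Icc 0 s := by
    ext x
    simp [MeasurableEquiv.funUnique, Fin.sum_univ_one, Fin.forall_fin_one]
  rw [hset]
  have : ∀ x : ℝ, g (∑ i, ((MeasurableEquiv.funUnique (Fin 1) ℝ).symm x) i + α) = g (x + α) := by
    intro x
    congr 1
    simp [MeasurableEquiv.funUnique, Fin.sum_univ_one]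
  simp_rw [this]
  rw [integral_Icc_eq_integral_Ioc, ← integral_of_le hs]






lemma lemB (g : ℝ → ℝ) (hg : Continuous g) (hg0 : ∀ x, 0 ≤ g x) (hg1 : ∀ x, g x ≤ 1) :
    ∀ (n : ℕ) (s α : ℝ), 0 ≤ s →
    (∫ t in {t : Fin (n+1) → ℝ | (∀ i, 0 ≤ t i) ∧ ∑ i, t i ≤ s}, g (∑ i, t i + α))
      ≤ ∫ T in (0:ℝ)..s, T ^ n / (n.factorial : ℝ) * g (T + α) := by
  intro n
  induction n with
  | zero =>
    intro s α hs
    rw [lemB_base g hg s α hs]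
    apply le_of_eq
    apply intervalIntegral.integral_congr
    intro T _
    simp
  | succ n IH =>
    intro s α hs
    set S : Set (Fin (n+2) → ℝ) := {t | (∀ i, 0 ≤ t i) ∧ ∑ i, t i ≤ s} with hS
    set F : (Fin (n+2) → ℝ) → ℝ := fun t => g (∑ i, t i + α) with hF
    set e : (Fin (n+2) → ℝ) ≃ᵐ ℝ × (Fin (n+1) → ℝ) :=
      MeasurableEquiv.piFinSuccAbove (fun _ : Fin (n+2) => ℝ) 0 with he
    have mp : MeasurePreserving e.symm
        (volume : Measure (ℝ × (Fin (n+1) → ℝ))) (volume : Measure (Fin (n+2) → ℝ)) :=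
      (volume_preserving_piFinSuccAbove (fun _ : Fin (n+2) => ℝ) 0).symm _
    have hcons : ∀ (x : ℝ) (t : Fin (n+1) → ℝ), e.symm (x, t) = Fin.cons x t := by
      intro x t
      show (MeasurableEquiv.piFinSuccAbove (fun _ : Fin (n+2) => ℝ) 0).symm (x, t) = _
      simp only [MeasurableEquiv.piFinSuccAbove_symm_apply]
      rw [Fin.insertNthEquiv_zero]
      rfl
    -- membership characterization
    have hmem : ∀ (x : ℝ) (t : Fin (n+1) → ℝ),
        Fin.cons x t ∈ S ↔ (0 ≤ x ∧ ∀ i, 0 ≤ t i) ∧ x + ∑ i, t i ≤ s := by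
      intro x t
      rw [hS]
      simp only [Set.mem_setOf_eq, Fin.sum_cons]
      constructor
      · rintro ⟨h1, h2⟩
        exact ⟨⟨by simpa using h1 0, fun i => by simpa using h1 i.succ⟩, h2⟩
      · rintro ⟨⟨h0, h1⟩, h2⟩
        refine ⟨fun i => ?_, h2⟩
        induction i using Fin.cases with
        | zero => simpa using h0
        | succ j => simpa using h1 j
    set H : ℝ × (Fin (n+1) → ℝ) → ℝ := fun p => S.indicator F (e.symm p) with hH
    -- transfer the integral
    have htrans : (∫ t in S, F t) = ∫ p, H p := by
      rw [← MeasureTheory.integral_indicator (simplex_meas (n+2) s)]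
      exact (mp.integral_comp e.symm.measurableEmbedding _).symm
    -- integrability of H
    have hHmeas : AEStronglyMeasurable H volume := by
      have : H = (e.symm ⁻¹' S).indicator (F ∘ e.symm) := by
        funext p
        simp only [hH]
        by_cases hp : e.symm p ∈ S
        · rw [Set.indicator_of_mem hp, Set.indicator_of_mem (Set.mem_preimage.mpr hp)]
          rfl
        · rw [Set.indicator_of_notMem hp,
            Set.indicator_of_notMem (fun h => hp (Set.mem_preimage.mp h))]
      rw [this]
      apply Measurable.aestronglyMeasurable
      apply Measurable.indicator
      · exact (hg.measurable.comp ((sum_meas (n+2)).add_const α)).comp e.symm.measurable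
      · exact e.symm.measurable (simplex_meas (n+2) s)
    have hHbound : ∀ p, ‖H p‖ ≤
        (Icc (0:ℝ) s ×ˢ Icc (0 : Fin (n+1) → ℝ) (fun _ => s)).indicator (fun _ => (1:ℝ)) p := by
      intro p
      by_cases hp : e.symm p ∈ S
      · have hmem' : Fin.cons p.1 p.2 ∈ S := by rwa [← hcons p.1 p.2, Prod.mk.eta]
        obtain ⟨⟨h0, h1⟩, h2⟩ := (hmem p.1 p.2).mp hmem'
        have hsum : 0 ≤ ∑ i, p.2 i := Finset.sum_nonneg (fun i _ => h1 i)
        have hpB : p ∈ Icc (0:ℝ) s ×ˢ Icc (0 : Fin (n+1) → ℝ) (fun _ => s) := by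
          constructor
          · exact ⟨h0, by linarith⟩
          · refine ⟨fun i => h1 i, fun i => ?_⟩
            have := Finset.single_le_sum (f := fun i => p.2 i) (fun j _ => h1 j)
              (Finset.mem_univ i)
            show p.2 i ≤ s
            linarith
        rw [Set.indicator_of_mem hpB]
        simp only [hH]
        rw [Set.indicator_of_mem hp]
        simp only [hF]
        rw [Real.norm_eq_abs, abs_of_nonneg (hg0 _)]
        exact hg1 _
      · simp only [hH]
        rw [Set.indicator_of_notMem hp, norm_zero]
        apply Set.indicator_nonneg
        intro _ _
        norm_num
    have hHint : Integrable H volume := by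
      apply Integrable.mono' _ hHmeas (Filter.Eventually.of_forall hHbound)
      rw [integrable_indicator_iff (measurableSet_Icc.prod measurableSet_Icc)]
      apply (integrableOn_const_iff).mpr
      right
      exact (isCompact_Icc.prod isCompact_Icc).measure_lt_top
    set φ : ℝ → ℝ := fun x => ∫ t, H (x, t) with hφ
    have hvol : (volume : Measure (ℝ × (Fin (n+1) → ℝ)))
        = (volume : Measure ℝ).prod (volume : Measure (Fin (n+1) → ℝ)) :=
      Measure.volume_eq_prod _ _
    have hfub : (∫ p, H p) = ∫ x, φ x := by
      rw [hvol] at hHint ⊢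
      exact integral_prod H hHint
    have hφint : Integrable φ volume := by
      rw [hvol] at hHint
      exact hHint.integral_prod_left
    have claim2 : ∀ x : ℝ, 0 ≤ x → φ x =
        ∫ t in {t : Fin (n+1) → ℝ | (∀ i, 0 ≤ t i) ∧ ∑ i, t i ≤ s - x},
          g (∑ i, t i + (x + α)) := by
      intro x hx
      rw [← MeasureTheory.integral_indicator (simplex_meas (n+1) (s-x))]
      simp only [hφ]
      congr 1
      funext t
      simp only [hH, hcons]
      by_cases ht : Fin.cons x t ∈ S
      · obtain ⟨⟨h0, h1⟩, h2⟩ := (hmem x t).mp ht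
        rw [Set.indicator_of_mem ht, Set.indicator_of_mem
          (by exact ⟨h1, by linarith⟩), hF]
        simp only [Fin.sum_cons]
        congr 1
        ring
      · rw [Set.indicator_of_notMem ht, Set.indicator_of_notMem]
        intro hmem'
        obtain ⟨h1, h2⟩ := hmem'
        exact ht ((hmem x t).mpr ⟨⟨hx, h1⟩, by linarith⟩)
    have hφ0 : ∀ x ∉ Icc (0:ℝ) s, φ x = 0 := by
      intro x hx
      have : ∀ t : Fin (n+1) → ℝ, H (x, t) = 0 := by
        intro t
        simp only [hH, hcons]
        apply Set.indicator_of_notMem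
        intro hc
        obtain ⟨⟨h0, h1⟩, h2⟩ := (hmem x t).mp hc
        have hsum : 0 ≤ ∑ i, t i := Finset.sum_nonneg (fun i _ => h1 i)
        simp only [Set.mem_Icc, not_and, not_le] at hx
        rcases le_or_gt 0 x with h | h
        · linarith [hx h]
        · linarith
      rw [hφ]
      simp only [this, MeasureTheory.integral_zero]
    set ψ : ℝ → ℝ := fun x => ∫ T in (0:ℝ)..(s - x), T ^ n / (n.factorial : ℝ) * g (T + x + α)
      with hψ
    have hunc : Continuous (Function.uncurry
        (fun (x T : ℝ) => T ^ n / (n.factorial : ℝ) * g (T + x + α))) := by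
      have huf : Function.uncurry (fun (x T : ℝ) => T ^ n / (n.factorial : ℝ) * g (T + x + α))
          = fun p : ℝ × ℝ => p.2 ^ n / (n.factorial : ℝ) * g (p.2 + p.1 + α) := rfl
      rw [huf]
      exact ((continuous_snd.pow n).div_const _).mul
        (hg.comp ((continuous_snd.add continuous_fst).add continuous_const))
    have hψcont : Continuous ψ := by
      rw [hψ]
      exact intervalIntegral.continuous_parametric_intervalIntegral_of_continuous hunc
        (continuous_const.sub continuous_id)
    have hmono : ∀ x ∈ Icc (0:ℝ) s, φ x ≤ ψ x := by
      intro x hx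
      rw [claim2 x hx.1]
      refine le_trans (IH (s - x) (x + α) (by linarith [hx.2])) (le_of_eq ?_)
      apply intervalIntegral.integral_congr
      intro T _
      show T ^ n / (n.factorial : ℝ) * g (T + (x + α)) = T ^ n / (n.factorial : ℝ) * g (T + x + α)
      rw [add_assoc]
    calc (∫ t in S, F t) = ∫ p, H p := htrans
      _ = ∫ x, φ x := hfub
      _ = ∫ x in Icc (0:ℝ) s, φ x :=
          (setIntegral_eq_integral_of_forall_compl_eq_zero hφ0).symm
      _ ≤ ∫ x in Icc (0:ℝ) s, ψ x :=
          setIntegral_mono_on hφint.integrableOn (hψcont.integrableOn_Icc)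
            measurableSet_Icc hmono
      _ = ∫ x in (0:ℝ)..s, ψ x := by
          rw [MeasureTheory.integral_Icc_eq_integral_Ioc, ← integral_of_le hs]
      _ = ∫ u in (0:ℝ)..s, u ^ (n+1) / ((n+1).factorial : ℝ) * g (u + α) := by
          simp only [hψ]
          exact lemA (fun u => g (u + α)) (hg.comp (continuous_id.add continuous_const)) n s hs


/-- Iterated time-integral estimate for nested graphs. -/
theorem nested_time_integral_estimate (δ : ℝ) (hδ0 : 0 < δ) (hδ1 : δ < 1) :
    ∃ C : ℝ, 0 < C ∧ ∀ (M : ℕ) (s α : ℝ), 0 < s → |α| ≤ s →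
      (1 ≤ M →
        (∫ t in {t : Fin M → ℝ | (∀ i, 0 ≤ t i) ∧ ∑ i, t i ≤ s},
            Real.sqrt (1 + (∑ i, t i + α) ^ 2) ^ (-(1 + δ)))
          ≤ ∫ T in (0:ℝ)..s,
              T ^ (M - 1) / Nat.factorial (M - 1) *
                Real.sqrt (1 + (T + α) ^ 2) ^ (-(1 + δ)))
      ∧ (2 ≤ M →
        (∫ T in (0:ℝ)..s, T ^ (M - 1) * Real.sqrt (1 + (T + α) ^ 2) ^ (-(1 + δ)))
          ≤ s ^ (M - 2) *
              ((∫ T in (0:ℝ)..s, Real.sqrt (1 + (T + α) ^ 2) ^ (-δ))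
                + |α| * ∫ T in (0:ℝ)..s, Real.sqrt (1 + (T + α) ^ 2) ^ (-(1 + δ))))
      ∧ (2 ≤ M →
        s ^ (M - 2) *
            ((∫ T in (0:ℝ)..s, Real.sqrt (1 + (T + α) ^ 2) ^ (-δ))
              + |α| * ∫ T in (0:ℝ)..s, Real.sqrt (1 + (T + α) ^ 2) ^ (-(1 + δ)))
          ≤ C * s ^ (M - 2) * (s ^ (1 - min δ (1/2)) + |α|)) := by
  have hCpos : (0:ℝ) < 10 + 2/δ := by
    have := div_pos (by norm_num : (0:ℝ) < 2) hδ0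
    linarith
  refine ⟨10 + 2/δ, hCpos, ?_⟩
  intro M s α hs hα
  refine ⟨?_, ?_, ?_⟩
  · -- part (i)
    intro hM
    obtain ⟨n, rfl⟩ : ∃ n, M = n + 1 := ⟨M - 1, by omega⟩
    exact lemB (ker (1+δ)) (ker_cont _) (fun x => ker_nonneg _ x)
      (fun x => ker_le_one _ x (by linarith)) n s α hs.le
  · -- part (ii)
    intro hM
    exact part2 δ hδ0 M hM s α hs
  · -- part (iii)
    intro hM
    show s ^ (M - 2) * ((∫ T in (0:ℝ)..s, ker δ (T + α))
        + |α| * ∫ T in (0:ℝ)..s, ker (1+δ) (T + α))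
      ≤ (10 + 2/δ) * s ^ (M - 2) * (s ^ (1 - min δ (1/2)) + |α|)
    have hδ'0 : 0 < min δ (1/2) := lt_min hδ0 (by norm_num)
    have hδ'le : min δ (1/2) ≤ δ := min_le_left _ _
    have hδ'half : min δ (1/2) ≤ 1/2 := min_le_right _ _
    have hY0 : (0:ℝ) ≤ s ^ (1 - min δ (1/2)) := Real.rpow_nonneg hs.le _
    have hX0 : (0:ℝ) ≤ (2*s) ^ (1 - min δ (1/2)) := Real.rpow_nonneg (by linarith) _
    have hA1 : (∫ T in (0:ℝ)..s, ker δ (T + α)) ≤ 2 * ∫ u in (0:ℝ)..(2*s), ker δ u :=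
      shift_bound δ s α hs hα
    have hA2 : (∫ u in (0:ℝ)..(2*s), ker δ u)
        ≤ (2*s) ^ (1 - min δ (1/2)) / (1 - min δ (1/2)) :=
      bound_kd δ (min δ (1/2)) hδ'0 (by linarith) hδ'le (2*s) (by linarith)
    have hA3 : (2*s) ^ (1 - min δ (1/2)) ≤ 2 * s ^ (1 - min δ (1/2)) := by
      rw [Real.mul_rpow (by norm_num) hs.le]
      apply mul_le_mul_of_nonneg_right _ hY0
      calc (2:ℝ) ^ (1 - min δ (1/2)) ≤ (2:ℝ) ^ (1:ℝ) :=
            Real.rpow_le_rpow_of_exponent_le (by norm_num) (by linarith)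
        _ = 2 := Real.rpow_one 2
    have hA4 : (2*s) ^ (1 - min δ (1/2)) / (1 - min δ (1/2)) ≤ (2*s) ^ (1 - min δ (1/2)) * 2 := by
      rw [div_eq_mul_inv]
      apply mul_le_mul_of_nonneg_left _ hX0
      rw [← one_div, div_le_iff₀ (by linarith)]
      linarith
    have hA : (∫ T in (0:ℝ)..s, ker δ (T + α)) ≤ 8 * s ^ (1 - min δ (1/2)) := by
      have h6 : (2*s) ^ (1 - min δ (1/2)) * 2 ≤ (2 * s ^ (1 - min δ (1/2))) * 2 :=
        mul_le_mul_of_nonneg_right hA3 (by norm_num)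
      linarith
    have hB1 : (∫ T in (0:ℝ)..s, ker (1+δ) (T + α)) ≤ 2 * ∫ u in (0:ℝ)..(2*s), ker (1+δ) u :=
      shift_bound (1+δ) s α hs hα
    have hB2 : (∫ u in (0:ℝ)..(2*s), ker (1+δ) u) ≤ 1 + 1/δ :=
      bound_k1d δ hδ0 (2*s) (by linarith)
    have hB : |α| * (∫ T in (0:ℝ)..s, ker (1+δ) (T + α)) ≤ |α| * (2 * (1 + 1/δ)) :=
      mul_le_mul_of_nonneg_left (by linarith) (abs_nonneg α)
    have hcore : (∫ T in (0:ℝ)..s, ker δ (T + α))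
        + |α| * (∫ T in (0:ℝ)..s, ker (1+δ) (T + α))
        ≤ (10 + 2/δ) * (s ^ (1 - min δ (1/2)) + |α|) := by
      have hd : (0:ℝ) ≤ 2/δ := by
        have := div_pos (by norm_num : (0:ℝ) < 2) hδ0
        linarith
      have e1 : 0 ≤ (2/δ) * s ^ (1 - min δ (1/2)) := mul_nonneg hd hY0
      have e2 : |α| * (2 * (1 + 1/δ)) = 2*|α| + (2/δ)*|α| := by
        field_simp
      have e3 : (10 + 2/δ) * (s ^ (1 - min δ (1/2)) + |α|)
          = 10 * s ^ (1 - min δ (1/2)) + (2/δ) * s ^ (1 - min δ (1/2))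
            + 10 * |α| + (2/δ) * |α| := by ring
      have e4 : (0:ℝ) ≤ |α| := abs_nonneg α
      linarith
    calc s ^ (M - 2) * ((∫ T in (0:ℝ)..s, ker δ (T + α))
          + |α| * ∫ T in (0:ℝ)..s, ker (1+δ) (T + α))
        ≤ s ^ (M - 2) * ((10 + 2/δ) * (s ^ (1 - min δ (1/2)) + |α|)) :=
          mul_le_mul_of_nonneg_left hcore (by positivity)
      _ = (10 + 2/δ) * s ^ (M - 2) * (s ^ (1 - min δ (1/2)) + |α|) := by ring
end
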